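/- arXiv:2202.06340 — 5 statements merged into one kernel-verified Lean document; each statement's English description precedes it below -/
import Mathlib

section
/- Let I = (0,1) and let ρ₀ : [0,1] → ℝ be defined by ρ₀(x) = x for x ∈ [0,1/2] and ρ₀(x) = 1 - x for x ∈ [1/2,1]. Then for every g ∈ C¹([0,1]), ∫₀^{1/2} g(x)² dx ≤ C (∫₀¹ ρ₀ g² dx)^{1/2} (∫₀¹ ρ₀ (g² + (g')²) dx)^{1/2} for some absolute constant C > 0. -/
open Set MeasureTheory

/-- Half of the weighted interpolation inequality (Lemma 7.2 of the paper):
with `ρ₀ x = min x (1-x)` on `[0,1]`, for `g ∈ C¹([0,1])`,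
`∫₀^{1/2} g² ≤ C ‖g‖_{L²_{ρ₀}} ‖g‖_{H¹_{ρ₀}}`. -/
theorem weighted_interpolation_half :
    ∃ C : ℝ, 0 < C ∧
      ∀ g g' : ℝ → ℝ,
        (∀ x ∈ Icc (0:ℝ) 1, HasDerivWithinAt g (g' x) (Icc (0:ℝ) 1) x) →
        ContinuousOn g' (Icc (0:ℝ) 1) →
        (∫ x in (0:ℝ)..(1/2), (g x) ^ 2) ≤
          C * Real.sqrt (∫ x in (0:ℝ)..1, min x (1 - x) * (g x) ^ 2) *
            Real.sqrt (∫ x in (0:ℝ)..1, min x (1 - x) * ((g x) ^ 2 + (g' x) ^ 2)) := by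
  refine ⟨6, by norm_num, ?_⟩
  intro g g' hg hg'
  set X := ∫ x in (0:ℝ)..1, min x (1 - x) * (g x) ^ 2 with hXdef
  set Y := ∫ x in (0:ℝ)..1, min x (1 - x) * ((g x) ^ 2 + (g' x) ^ 2) with hYdef
  have hgc : ContinuousOn g (Icc (0:ℝ) 1) := fun x hx => (hg x hx).continuousWithinAt
  have hsub : Icc (0:ℝ) (1/2) ⊆ Icc (0:ℝ) 1 := Icc_subset_Icc le_rfl (by norm_num)
  have hsub2 : Icc (1/2:ℝ) 1 ⊆ Icc (0:ℝ) 1 := Icc_subset_Icc (by norm_num) le_rfl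
  have hu01 : uIcc (0:ℝ) 1 = Icc 0 1 := uIcc_of_le (by norm_num)
  have hu0h : uIcc (0:ℝ) (1/2) = Icc 0 (1/2) := uIcc_of_le (by norm_num)
  have huh1 : uIcc (1/2:ℝ) 1 = Icc (1/2) 1 := uIcc_of_le (by norm_num)
  -- continuity facts
  have hgc2 : ContinuousOn (fun x => (g x) ^ 2) (Icc (0:ℝ) 1) := hgc.pow 2
  have hg'c2 : ContinuousOn (fun x => (g' x) ^ 2) (Icc (0:ℝ) 1) := hg'.pow 2
  have hmin : ContinuousOn (fun x : ℝ => min x (1 - x)) (Icc (0:ℝ) 1) :=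
    (continuous_id.min (continuous_const.sub continuous_id)).continuousOn
  -- integrability facts
  have iX : IntervalIntegrable (fun x => min x (1 - x) * (g x) ^ 2) volume 0 1 := by
    apply ContinuousOn.intervalIntegrable; rw [hu01]; exact hmin.mul hgc2
  have iY : IntervalIntegrable (fun x => min x (1 - x) * ((g x) ^ 2 + (g' x) ^ 2)) volume 0 1 := by
    apply ContinuousOn.intervalIntegrable; rw [hu01]; exact hmin.mul (hgc2.add hg'c2)
  have iA : IntervalIntegrable (fun x => (g x) ^ 2) volume 0 (1/2) := by
    apply ContinuousOn.intervalIntegrable; rw [hu0h]; exact hgc2.mono hsub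
  have iB : IntervalIntegrable (fun x => x * (g x) ^ 2) volume 0 (1/2) := by
    apply ContinuousOn.intervalIntegrable; rw [hu0h]
    exact continuousOn_id.mul (hgc2.mono hsub)
  have iB' : IntervalIntegrable (fun x => x * (g' x) ^ 2) volume 0 (1/2) := by
    apply ContinuousOn.intervalIntegrable; rw [hu0h]
    exact continuousOn_id.mul (hg'c2.mono hsub)
  have iBB' : IntervalIntegrable (fun x => x * ((g x) ^ 2 + (g' x) ^ 2)) volume 0 (1/2) := by
    apply ContinuousOn.intervalIntegrable; rw [hu0h]
    exact continuousOn_id.mul ((hgc2.add hg'c2).mono hsub)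
  have ih : IntervalIntegrable
      (fun x => 4 * x * (g x) ^ 2 - (x - 2 * x ^ 2) * (2 * g x * g' x)) volume 0 (1/2) := by
    apply ContinuousOn.intervalIntegrable; rw [hu0h]
    exact ((continuous_const.mul continuous_id).continuousOn.mul (hgc2.mono hsub)).sub
      (((continuous_id.sub (continuous_const.mul (continuous_pow 2))).continuousOn).mul
        ((continuous_const.continuousOn.mul (hgc.mono hsub)).mul (hg'.mono hsub)))
  -- FTC identity
  have hFTC : (∫ x in (0:ℝ)..(1/2),
      ((1 - 4 * x) * (g x) ^ 2 + (x - 2 * x ^ 2) * (2 * g x * g' x))) = 0 := by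
    have key := intervalIntegral.integral_eq_sub_of_hasDeriv_right_of_le
      (f := fun x => (x - 2 * x ^ 2) * (g x) ^ 2)
      (f' := fun x => (1 - 4 * x) * (g x) ^ 2 + (x - 2 * x ^ 2) * (2 * g x * g' x))
      (by norm_num : (0:ℝ) ≤ 1/2)
      ?_ ?_ ?_
    · rw [key]; norm_num
    · exact ((continuous_id.sub (continuous_const.mul (continuous_pow 2))).continuousOn).mul
        (hgc2.mono hsub)
    · intro x hx
      have hx1 : x ∈ Icc (0:ℝ) 1 := ⟨hx.1.le, by linarith [hx.2]⟩
      have hmem : Icc (0:ℝ) 1 ∈ nhds x := Icc_mem_nhds hx.1 (by linarith [hx.2])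
      have hgd : HasDerivAt g (g' x) x := (hg x hx1).hasDerivAt hmem
      have h1 : HasDerivAt (fun x : ℝ => x - 2 * x ^ 2) (1 - 4 * x) x := by
        have := (hasDerivAt_id x).sub ((hasDerivAt_pow 2 x).const_mul 2)
        exact this.congr_deriv (by ring)
      have h2 : HasDerivAt (fun x => (g x) ^ 2) (2 * g x * g' x) x := by
        exact (hgd.pow 2).congr_deriv (by ring)
      exact (h1.mul h2).hasDerivWithinAt
    · apply ContinuousOn.intervalIntegrable; rw [hu0h]
      exact (((continuous_const.sub (continuous_const.mul continuous_id)).continuousOn).mul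
          (hgc2.mono hsub)).add
        (((continuous_id.sub (continuous_const.mul (continuous_pow 2))).continuousOn).mul
          ((continuous_const.continuousOn.mul (hgc.mono hsub)).mul (hg'.mono hsub)))
  have hAeq : (∫ x in (0:ℝ)..(1/2), (g x) ^ 2) =
      ∫ x in (0:ℝ)..(1/2), (4 * x * (g x) ^ 2 - (x - 2 * x ^ 2) * (2 * g x * g' x)) := by
    have hsubint := intervalIntegral.integral_sub iA ih
    have h2 : (∫ x in (0:ℝ)..(1/2),
        ((g x) ^ 2 - (4 * x * (g x) ^ 2 - (x - 2 * x ^ 2) * (2 * g x * g' x)))) = 0 := by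
      have hc : (∫ x in (0:ℝ)..(1/2),
          ((g x) ^ 2 - (4 * x * (g x) ^ 2 - (x - 2 * x ^ 2) * (2 * g x * g' x)))) =
          ∫ x in (0:ℝ)..(1/2),
            ((1 - 4 * x) * (g x) ^ 2 + (x - 2 * x ^ 2) * (2 * g x * g' x)) :=
        intervalIntegral.integral_congr (fun x _ => by ring)
      rw [hc]; exact hFTC
    rw [h2] at hsubint
    linarith [hsubint]
  -- splitting the weighted integrals
  have hsplitX : (∫ x in (0:ℝ)..(1/2), x * (g x) ^ 2) ≤ X := by
    have e1 : (∫ x in (0:ℝ)..(1/2), min x (1 - x) * (g x) ^ 2) =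
        ∫ x in (0:ℝ)..(1/2), x * (g x) ^ 2 := by
      apply intervalIntegral.integral_congr
      intro x hx
      rw [hu0h] at hx
      have : min x (1 - x) = x := min_eq_left (by linarith [hx.2])
      simp [this]
    have e2 : (0:ℝ) ≤ ∫ x in (1/2:ℝ)..1, min x (1 - x) * (g x) ^ 2 := by
      apply intervalIntegral.integral_nonneg (by norm_num)
      intro x hx
      have : (0:ℝ) ≤ min x (1 - x) := le_min (by linarith [hx.1]) (by linarith [hx.2])
      positivity
    have := intervalIntegral.integral_add_adjacent_intervals
      (iX.mono_set (show uIcc (0:ℝ) (1/2) ⊆ uIcc (0:ℝ) 1 by rw [hu0h, hu01]; exact hsub))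
      (iX.mono_set (show uIcc (1/2:ℝ) 1 ⊆ uIcc (0:ℝ) 1 by rw [huh1, hu01]; exact hsub2))
    rw [hXdef, ← this, e1]
    linarith
  have hsplitY : (∫ x in (0:ℝ)..(1/2), x * (g' x) ^ 2) ≤ Y := by
    have s1 : (∫ x in (0:ℝ)..(1/2), x * (g' x) ^ 2) ≤
        ∫ x in (0:ℝ)..(1/2), x * ((g x) ^ 2 + (g' x) ^ 2) := by
      apply intervalIntegral.integral_mono_on (by norm_num) iB' iBB'
      intro x hx
      have hx0 : (0:ℝ) ≤ x := hx.1
      nlinarith [sq_nonneg (g x)]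
    have e1 : (∫ x in (0:ℝ)..(1/2), min x (1 - x) * ((g x) ^ 2 + (g' x) ^ 2)) =
        ∫ x in (0:ℝ)..(1/2), x * ((g x) ^ 2 + (g' x) ^ 2) := by
      apply intervalIntegral.integral_congr
      intro x hx
      rw [hu0h] at hx
      have : min x (1 - x) = x := min_eq_left (by linarith [hx.2])
      simp [this]
    have e2 : (0:ℝ) ≤ ∫ x in (1/2:ℝ)..1, min x (1 - x) * ((g x) ^ 2 + (g' x) ^ 2) := by
      apply intervalIntegral.integral_nonneg (by norm_num)
      intro x hx
      have : (0:ℝ) ≤ min x (1 - x) := le_min (by linarith [hx.1]) (by linarith [hx.2])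
      positivity
    have := intervalIntegral.integral_add_adjacent_intervals
      (iY.mono_set (show uIcc (0:ℝ) (1/2) ⊆ uIcc (0:ℝ) 1 by rw [hu0h, hu01]; exact hsub))
      (iY.mono_set (show uIcc (1/2:ℝ) 1 ⊆ uIcc (0:ℝ) 1 by rw [huh1, hu01]; exact hsub2))
    rw [hYdef, ← this]
    linarith [s1, e1, e2]
  have hX0 : (0:ℝ) ≤ X := by
    apply intervalIntegral.integral_nonneg (by norm_num)
    intro x hx
    have : (0:ℝ) ≤ min x (1 - x) := le_min hx.1 (by linarith [hx.2])
    positivity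
  have hXY : X ≤ Y := by
    apply intervalIntegral.integral_mono_on (by norm_num) iX iY
    intro x hx
    have : (0:ℝ) ≤ min x (1 - x) := le_min hx.1 (by linarith [hx.2])
    nlinarith [sq_nonneg (g' x)]
  -- key inequality for all t > 0
  have hkey : ∀ t : ℝ, 0 < t →
      (∫ x in (0:ℝ)..(1/2), (g x) ^ 2) ≤ (4 + t) * X + Y / t := by
    intro t ht
    have hpt : ∀ x ∈ Icc (0:ℝ) (1/2),
        4 * x * (g x) ^ 2 - (x - 2 * x ^ 2) * (2 * g x * g' x) ≤
        (4 + t) * (x * (g x) ^ 2) + (x * (g' x) ^ 2) / t := by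
      intro x hx
      have hx0 : (0:ℝ) ≤ x := hx.1
      have hx1 : (0:ℝ) ≤ 1 - x := by linarith [hx.2]
      rw [← sub_le_iff_le_add', le_div_iff₀ ht]
      nlinarith [mul_nonneg (mul_nonneg hx0 hx1) (sq_nonneg (t * g x + g' x)),
        mul_nonneg (sq_nonneg x) (sq_nonneg (t * g x - g' x)), sq_nonneg (g x), ht.le]
    have irhs : IntervalIntegrable
        (fun x => (4 + t) * (x * (g x) ^ 2) + (x * (g' x) ^ 2) / t) volume 0 (1/2) :=
      ((iB.const_mul _).add (iB'.div_const _))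
    have h1 : (∫ x in (0:ℝ)..(1/2), (g x) ^ 2) ≤
        ∫ x in (0:ℝ)..(1/2), ((4 + t) * (x * (g x) ^ 2) + (x * (g' x) ^ 2) / t) := by
      rw [hAeq]
      exact intervalIntegral.integral_mono_on (by norm_num) ih irhs hpt
    rw [intervalIntegral.integral_add (iB.const_mul _) (iB'.div_const _),
      intervalIntegral.integral_const_mul, intervalIntegral.integral_div] at h1
    have h2 : (4 + t) * ∫ x in (0:ℝ)..(1/2), x * (g x) ^ 2 ≤ (4 + t) * X :=
      mul_le_mul_of_nonneg_left hsplitX (by linarith)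
    have h3 : (∫ x in (0:ℝ)..(1/2), x * (g' x) ^ 2) / t ≤ Y / t := by
      gcongr
    calc (∫ x in (0:ℝ)..(1/2), (g x) ^ 2) ≤ _ := h1
      _ ≤ (4 + t) * X + Y / t := by linarith
  -- conclude
  rcases eq_or_lt_of_le hX0 with hX | hX
  · -- X = 0
    rw [← hX, Real.sqrt_zero, mul_zero, zero_mul]
    have hY0 : (0:ℝ) ≤ Y := le_trans hX0 hXY
    apply le_of_forall_pos_le_add
    intro ε hε
    have ht : (0:ℝ) < (Y + 1) / ε := by positivity
    have := hkey _ ht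
    rw [← hX] at this
    have : (∫ x in (0:ℝ)..(1/2), (g x) ^ 2) ≤ Y / ((Y + 1) / ε) := by linarith
    have h4 : Y / ((Y + 1) / ε) ≤ ε := by
      rw [div_le_iff₀ ht]
      have he : ε * ((Y + 1) / ε) = Y + 1 := by field_simp
      rw [he]; linarith
    linarith
  · -- X > 0
    have hY : (0:ℝ) < Y := lt_of_lt_of_le hX hXY
    set sX := Real.sqrt X with hsX
    set sY := Real.sqrt Y with hsY
    have hsX0 : 0 < sX := Real.sqrt_pos.mpr hX
    have hsY0 : 0 < sY := Real.sqrt_pos.mpr hY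
    have hXs : sX ^ 2 = X := Real.sq_sqrt hX0
    have hYs : sY ^ 2 = Y := Real.sq_sqrt (le_trans hX0 hXY)
    have hsXY : sX ≤ sY := Real.sqrt_le_sqrt hXY
    have ht : (0:ℝ) < sY / sX := by positivity
    have := hkey _ ht
    have heq : (4 + sY / sX) * X + Y / (sY / sX) = 4 * sX ^ 2 + 2 * sX * sY := by
      rw [← hXs, ← hYs]; field_simp; ring
    rw [heq] at this
    calc (∫ x in (0:ℝ)..(1/2), (g x) ^ 2) ≤ 4 * sX ^ 2 + 2 * sX * sY := this
      _ ≤ 6 * sX * sY := by nlinarith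
end

section
/- Let I = (0,1) and ρ₀(x) = min(x, 1-x). Then there is a constant C > 0 such that for all g ∈ C¹([0,1]), ∫₀¹ g(x)² dx ≤ C (∫₀¹ ρ₀ g² dx)^{1/2} (∫₀¹ ρ₀ (g² + (g')²) dx)^{1/2}. -/
open Set MeasureTheory intervalIntegral

/-- Pointwise AM-GM type estimate used below. -/
private lemma wi_ptwise (t u v Fx wx : ℝ) (ht : 0 < t) (hF : |Fx| ≤ wx) :
    -(Fx * (2 * u * v)) ≤ t * (wx * u ^ 2) + (1 / t) * (wx * v ^ 2) := by
  obtain ⟨h1, h2⟩ := abs_le.mp hF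
  have key : 0 ≤ (wx + Fx) * (t * u + v) ^ 2 + (wx - Fx) * (t * u - v) ^ 2 := by
    have := sq_nonneg (t * u + v)
    have := sq_nonneg (t * u - v)
    nlinarith
  have h3 : 0 < 1 / (2 * t) := by positivity
  have hexp : t * (wx * u ^ 2) + (1 / t) * (wx * v ^ 2) + Fx * (2 * u * v)
      = (1 / (2 * t)) * ((wx + Fx) * (t * u + v) ^ 2 + (wx - Fx) * (t * u - v) ^ 2) := by
    field_simp
    ring
  nlinarith [mul_nonneg h3.le key]

/-- Integration-by-parts based bound on a half interval. -/
private lemma wi_half (g g' F F' w : ℝ → ℝ) (a b : ℝ)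
    (hab : a ≤ b) (h0 : (0:ℝ) ≤ a) (h1 : b ≤ 1)
    (hgc : ContinuousOn g (Icc 0 1))
    (hg : ∀ x ∈ Ioo a b, HasDerivAt g (g' x) x)
    (hg'c : ContinuousOn g' (Icc 0 1))
    (hFd : ∀ x, HasDerivAt F (F' x) x)
    (hF'c : Continuous F') (hwc : Continuous w)
    (hFa : F a = 0) (hFb : F b = 0)
    (hFw : ∀ x ∈ Icc a b, |F x| ≤ w x)
    (hF'w : ∀ x ∈ Icc a b, 1 ≤ F' x + 4 * w x)
    (t : ℝ) (ht : 0 < t) :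
    (∫ x in a..b, (g x) ^ 2) ≤
      ∫ x in a..b, ((4 + t) * (w x * (g x) ^ 2) + (1 / t) * (w x * (g' x) ^ 2)) := by
  have hsub : Icc a b ⊆ Icc (0:ℝ) 1 := Icc_subset_Icc h0 h1
  have hgc' : ContinuousOn g (Icc a b) := hgc.mono hsub
  have hg'c' : ContinuousOn g' (Icc a b) := hg'c.mono hsub
  have hFc : Continuous F := by
    rw [continuous_iff_continuousAt]; exact fun x => (hFd x).continuousAt
  -- integrability facts
  have I1 : IntervalIntegrable (fun x => (g x) ^ 2) volume a b :=
    (hgc'.pow 2).intervalIntegrable_of_Icc hab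
  have IF' : IntervalIntegrable (fun x => F' x * (g x) ^ 2) volume a b :=
    (hF'c.continuousOn.mul (hgc'.pow 2)).intervalIntegrable_of_Icc hab
  have IFg : IntervalIntegrable (fun x => F x * (2 * g x * g' x)) volume a b :=
    (hFc.continuousOn.mul ((continuousOn_const.mul hgc').mul hg'c')).intervalIntegrable_of_Icc hab
  have Iw2 : IntervalIntegrable (fun x => w x * (g x) ^ 2) volume a b :=
    (hwc.continuousOn.mul (hgc'.pow 2)).intervalIntegrable_of_Icc hab
  have Iw2' : IntervalIntegrable (fun x => w x * (g' x) ^ 2) volume a b :=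
    (hwc.continuousOn.mul (hg'c'.pow 2)).intervalIntegrable_of_Icc hab
  -- integration by parts
  have key : (∫ x in a..b, (F' x * (g x) ^ 2 + F x * (2 * g x * g' x))) = 0 := by
    have hderiv : ∀ x ∈ Ioo a b, HasDerivWithinAt (fun y => F y * (g y) ^ 2)
        (F' x * (g x) ^ 2 + F x * (2 * g x * g' x)) (Ioi x) x := by
      intro x hx
      have hgd := hg x hx
      have h2 : HasDerivAt (fun y => F y * (g y) ^ 2)
          (F' x * (g x) ^ 2 + F x * (2 * g x * g' x)) x := by
        have := (hFd x).fun_mul (hgd.fun_pow 2)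
        refine this.congr_deriv ?_
        push_cast
        ring
      exact h2.hasDerivWithinAt
    have hcont : ContinuousOn (fun y => F y * (g y) ^ 2) (Icc a b) :=
      hFc.continuousOn.mul (hgc'.pow 2)
    have := integral_eq_sub_of_hasDeriv_right_of_le hab hcont hderiv (IF'.add IFg)
    rw [hFa, hFb] at this
    simpa using this
  have hadd := integral_add IF' IFg
  have hFgEq : (∫ x in a..b, F' x * (g x) ^ 2) = -∫ x in a..b, F x * (2 * g x * g' x) := by
    linarith [key, hadd]
  -- main chain
  have step1 : (∫ x in a..b, (g x) ^ 2) ≤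
      ∫ x in a..b, (F' x * (g x) ^ 2 + 4 * (w x * (g x) ^ 2)) := by
    apply integral_mono_on hab I1 (IF'.add (Iw2.const_mul 4))
    intro x hx
    have := hF'w x hx
    nlinarith [sq_nonneg (g x)]
  have step2 : (∫ x in a..b, (F' x * (g x) ^ 2 + 4 * (w x * (g x) ^ 2))) =
      (∫ x in a..b, F' x * (g x) ^ 2) + 4 * ∫ x in a..b, w x * (g x) ^ 2 := by
    rw [integral_add IF' (Iw2.const_mul 4), intervalIntegral.integral_const_mul]
  have step3 : (-∫ x in a..b, F x * (2 * g x * g' x)) ≤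
      ∫ x in a..b, (t * (w x * (g x) ^ 2) + (1 / t) * (w x * (g' x) ^ 2)) := by
    rw [← intervalIntegral.integral_neg]
    apply integral_mono_on hab IFg.neg ((Iw2.const_mul t).add (Iw2'.const_mul (1 / t)))
    intro x hx
    exact wi_ptwise t (g x) (g' x) (F x) (w x) ht (hFw x hx)
  have step4 : (∫ x in a..b, (t * (w x * (g x) ^ 2) + (1 / t) * (w x * (g' x) ^ 2)))
        + 4 * (∫ x in a..b, w x * (g x) ^ 2) =
      ∫ x in a..b, ((4 + t) * (w x * (g x) ^ 2) + (1 / t) * (w x * (g' x) ^ 2)) := by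
    rw [integral_add (Iw2.const_mul t) (Iw2'.const_mul (1 / t)),
      integral_add (Iw2.const_mul (4 + t)) (Iw2'.const_mul (1 / t)),
      intervalIntegral.integral_const_mul, intervalIntegral.integral_const_mul, intervalIntegral.integral_const_mul]
    ring
  calc (∫ x in a..b, (g x) ^ 2)
      ≤ ∫ x in a..b, (F' x * (g x) ^ 2 + 4 * (w x * (g x) ^ 2)) := step1
    _ = (∫ x in a..b, F' x * (g x) ^ 2) + 4 * ∫ x in a..b, w x * (g x) ^ 2 := step2
    _ = (-∫ x in a..b, F x * (2 * g x * g' x)) + 4 * ∫ x in a..b, w x * (g x) ^ 2 := by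
        rw [hFgEq]
    _ ≤ (∫ x in a..b, (t * (w x * (g x) ^ 2) + (1 / t) * (w x * (g' x) ^ 2)))
        + 4 * ∫ x in a..b, w x * (g x) ^ 2 := by linarith [step3]
    _ = _ := step4

/-- Scalar optimization step. -/
private lemma wi_scalar (P A Bd : ℝ) (hA : 0 ≤ A) (hBd : 0 ≤ Bd)
    (h : ∀ t : ℝ, 0 < t → P ≤ (4 + t) * A + (1 / t) * Bd) :
    P ≤ 6 * Real.sqrt A * Real.sqrt (A + Bd) := by
  rcases eq_or_lt_of_le hA with hA0 | hApos
  · have hP : P ≤ 0 := by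
      by_contra hP
      push_neg at hP
      have ht : 0 < (Bd + 1) / P := by positivity
      have h1 := h _ ht
      rw [← hA0] at h1
      have h2 : (1 / ((Bd + 1) / P)) * Bd = P * Bd / (Bd + 1) := by
        field_simp
      rw [h2] at h1
      have h3 := (le_div_iff₀ (by positivity : (0:ℝ) < Bd + 1)).mp (by linarith : P ≤ P * Bd / (Bd + 1))
      nlinarith
    rw [← hA0]
    simpa using hP
  · set sA := Real.sqrt A with hsAdef
    set sB := Real.sqrt (A + Bd) with hsBdef
    have hsA : 0 < sA := Real.sqrt_pos.2 hApos
    have hsB : 0 < sB := Real.sqrt_pos.2 (by linarith)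
    have hA2 : sA ^ 2 = A := Real.sq_sqrt hApos.le
    have hB2 : sB ^ 2 = A + Bd := Real.sq_sqrt (by linarith)
    have ht : 0 < sB / sA := by positivity
    have h1 := h _ ht
    have e1 : (4 + sB / sA) * A = 4 * A + sB * sA := by
      rw [← hA2]; field_simp
    have e2 : (1 / (sB / sA)) * Bd = sA * Bd / sB := by
      rw [one_div_div, div_mul_eq_mul_div]
    rw [e1, e2] at h1
    have h4 : sA * Bd / sB ≤ sA * sB := by
      rw [div_le_iff₀ hsB]
      nlinarith [mul_nonneg hsA.le (sq_nonneg sA)]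
    have h5 : 4 * A ≤ 4 * (sA * sB) := by
      have hAB : sA ≤ sB := by
        rw [hsAdef, hsBdef]; exact Real.sqrt_le_sqrt (by linarith)
      nlinarith
    linarith

/-- The weighted interpolation inequality (Lemma 7.2 of the paper):
with `ρ₀ x = min x (1-x)` on `I = (0,1)`,
`‖g‖²_{L²(I)} ≤ C ‖g‖_{L²_{ρ₀}} ‖g‖_{H¹_{ρ₀}}` for all `g ∈ C¹([0,1])`. -/
theorem weighted_interpolation :
    ∃ C : ℝ, 0 < C ∧
      ∀ g g' : ℝ → ℝ,
        (∀ x ∈ Icc (0:ℝ) 1, HasDerivWithinAt g (g' x) (Icc (0:ℝ) 1) x) →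
        ContinuousOn g' (Icc (0:ℝ) 1) →
        (∫ x in (0:ℝ)..1, (g x) ^ 2) ≤
          C * Real.sqrt (∫ x in (0:ℝ)..1, min x (1 - x) * (g x) ^ 2) *
            Real.sqrt (∫ x in (0:ℝ)..1, min x (1 - x) * ((g x) ^ 2 + (g' x) ^ 2)) := by
  refine ⟨6, by norm_num, ?_⟩
  intro g g' hg hg'c
  have hgc : ContinuousOn g (Icc (0:ℝ) 1) :=
    fun x hx => ((hg x hx).differentiableWithinAt).continuousWithinAt
  have hρc : Continuous (fun x : ℝ => min x (1 - x)) :=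
    continuous_id.min (continuous_const.sub continuous_id)
  -- continuity of integrands on [0,1]
  have cg2 : ContinuousOn (fun x => (g x) ^ 2) (Icc (0:ℝ) 1) := hgc.pow 2
  have cρg2 : ContinuousOn (fun x => min x (1 - x) * (g x) ^ 2) (Icc (0:ℝ) 1) :=
    hρc.continuousOn.mul cg2
  have cρg'2 : ContinuousOn (fun x => min x (1 - x) * (g' x) ^ 2) (Icc (0:ℝ) 1) :=
    hρc.continuousOn.mul (hg'c.pow 2)
  -- interval integrability on subintervals of [0,1]
  have subI : ∀ a b : ℝ, 0 ≤ a → a ≤ b → b ≤ 1 →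
      ∀ u : ℝ → ℝ, ContinuousOn u (Icc (0:ℝ) 1) → IntervalIntegrable u volume a b :=
    fun a b h0 hab h1 u hu =>
      (hu.mono (Icc_subset_Icc h0 h1)).intervalIntegrable_of_Icc hab
  -- derivative at interior points
  have hgI : ∀ a b : ℝ, 0 ≤ a → b ≤ 1 → ∀ x ∈ Ioo a b, HasDerivAt g (g' x) x := by
    intro a b h0 h1 x hx
    have hx' : x ∈ Ioo (0:ℝ) 1 := ⟨lt_of_le_of_lt h0 hx.1, lt_of_lt_of_le hx.2 h1⟩
    exact (hg x (Ioo_subset_Icc_self hx')).hasDerivAt (Icc_mem_nhds hx'.1 hx'.2)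
  set A := ∫ x in (0:ℝ)..1, min x (1 - x) * (g x) ^ 2 with hAdef
  set Bd := ∫ x in (0:ℝ)..1, min x (1 - x) * (g' x) ^ 2 with hBddef
  have hA0 : 0 ≤ A := by
    apply integral_nonneg (by norm_num : (0:ℝ) ≤ 1)
    intro u hu
    have : 0 ≤ min u (1 - u) := le_min hu.1 (by linarith [hu.2])
    positivity
  have hBd0 : 0 ≤ Bd := by
    apply integral_nonneg (by norm_num : (0:ℝ) ≤ 1)
    intro u hu
    have : 0 ≤ min u (1 - u) := le_min hu.1 (by linarith [hu.2])
    positivity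
  have hB : (∫ x in (0:ℝ)..1, min x (1 - x) * ((g x) ^ 2 + (g' x) ^ 2)) = A + Bd := by
    simp only [mul_add]
    exact integral_add (subI 0 1 le_rfl (by norm_num) le_rfl _ cρg2)
      (subI 0 1 le_rfl (by norm_num) le_rfl _ cρg'2)
  rw [hB]
  apply wi_scalar _ _ _ hA0 hBd0
  intro t ht
  -- left half bound
  have hL := wi_half g g' (fun x => x - 2 * x ^ 2) (fun x => 1 - 4 * x)
      (fun x => min x (1 - x)) 0 (1/2) (by norm_num) le_rfl (by norm_num)
      hgc (hgI 0 (1/2) le_rfl (by norm_num)) hg'c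
      (by
        intro x
        have h := (hasDerivAt_id x).sub ((hasDerivAt_pow 2 x).const_mul 2)
        refine h.congr_deriv ?_
        push_cast
        ring)
      (by fun_prop) hρc (by norm_num) (by norm_num)
      (by
        intro x hx
        have hx1 : (0:ℝ) ≤ x := hx.1
        have hx2 : x ≤ 1/2 := hx.2
        rw [min_eq_left (by linarith), abs_of_nonneg (by nlinarith)]
        nlinarith)
      (by
        intro x hx
        have hx1 : (0:ℝ) ≤ x := hx.1
        have hx2 : x ≤ 1/2 := hx.2
        rw [min_eq_left (by linarith)]
        linarith)
      t ht
  -- right half bound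
  have hR := wi_half g g' (fun x => 2 * x ^ 2 - 3 * x + 1) (fun x => 4 * x - 3)
      (fun x => min x (1 - x)) (1/2) 1 (by norm_num) (by norm_num) le_rfl
      hgc (hgI (1/2) 1 (by norm_num) le_rfl) hg'c
      (by
        intro x
        have h := (((hasDerivAt_pow 2 x).const_mul 2).sub ((hasDerivAt_id x).const_mul 3)).add_const 1
        refine h.congr_deriv ?_
        push_cast
        ring)
      (by fun_prop) hρc (by norm_num) (by norm_num)
      (by
        intro x hx
        have hx1 : (1:ℝ)/2 ≤ x := hx.1
        have hx2 : x ≤ 1 := hx.2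
        rw [min_eq_right (by linarith), abs_of_nonpos (by nlinarith)]
        nlinarith)
      (by
        intro x hx
        have hx1 : (1:ℝ)/2 ≤ x := hx.1
        have hx2 : x ≤ 1 := hx.2
        rw [min_eq_right (by linarith)]
        linarith)
      t ht
  -- combine halves
  have hsplitg : (∫ x in (0:ℝ)..1, (g x) ^ 2) =
      (∫ x in (0:ℝ)..(1/2), (g x) ^ 2) + ∫ x in (1/2:ℝ)..1, (g x) ^ 2 :=
    (integral_add_adjacent_intervals
      (subI 0 (1/2) le_rfl (by norm_num) (by norm_num) _ cg2)
      (subI (1/2) 1 (by norm_num) (by norm_num) le_rfl _ cg2)).symm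
  have cbig : ContinuousOn
      (fun x => (4 + t) * (min x (1 - x) * (g x) ^ 2) + (1 / t) * (min x (1 - x) * (g' x) ^ 2))
      (Icc (0:ℝ) 1) :=
    (continuousOn_const.mul cρg2).add (continuousOn_const.mul cρg'2)
  have hsplitbig : (∫ x in (0:ℝ)..1,
        ((4 + t) * (min x (1 - x) * (g x) ^ 2) + (1 / t) * (min x (1 - x) * (g' x) ^ 2))) =
      (∫ x in (0:ℝ)..(1/2),
        ((4 + t) * (min x (1 - x) * (g x) ^ 2) + (1 / t) * (min x (1 - x) * (g' x) ^ 2))) +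
      ∫ x in (1/2:ℝ)..1,
        ((4 + t) * (min x (1 - x) * (g x) ^ 2) + (1 / t) * (min x (1 - x) * (g' x) ^ 2)) :=
    (integral_add_adjacent_intervals
      (subI 0 (1/2) le_rfl (by norm_num) (by norm_num) _ cbig)
      (subI (1/2) 1 (by norm_num) (by norm_num) le_rfl _ cbig)).symm
  have hbigval : (∫ x in (0:ℝ)..1,
        ((4 + t) * (min x (1 - x) * (g x) ^ 2) + (1 / t) * (min x (1 - x) * (g' x) ^ 2))) =
      (4 + t) * A + (1 / t) * Bd := by
    rw [integral_add
        ((subI 0 1 le_rfl (by norm_num) le_rfl _ cρg2).const_mul (4 + t))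
        ((subI 0 1 le_rfl (by norm_num) le_rfl _ cρg'2).const_mul (1 / t)),
      intervalIntegral.integral_const_mul, intervalIntegral.integral_const_mul]
  calc (∫ x in (0:ℝ)..1, (g x) ^ 2)
      = (∫ x in (0:ℝ)..(1/2), (g x) ^ 2) + ∫ x in (1/2:ℝ)..1, (g x) ^ 2 := hsplitg
    _ ≤ (∫ x in (0:ℝ)..(1/2),
          ((4 + t) * (min x (1 - x) * (g x) ^ 2) + (1 / t) * (min x (1 - x) * (g' x) ^ 2))) +
        ∫ x in (1/2:ℝ)..1,
          ((4 + t) * (min x (1 - x) * (g x) ^ 2) + (1 / t) * (min x (1 - x) * (g' x) ^ 2)) := by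
        exact add_le_add hL hR
    _ = (4 + t) * A + (1 / t) * Bd := by rw [← hsplitbig, hbigval]
end

section
/- Let d(x) = min(x, 1-x) for x ∈ (0,1). For every nonnegative integer k there is a constant C = C(k) such that for all w ∈ C¹([0,1]), ∫₀¹ d(x)^k w(x)² dx ≤ C ∫₀¹ d(x)^{k+2} (w(x)² + w'(x)²) dx. -/
open Set MeasureTheory
open intervalIntegral

lemma myFTC {a b : ℝ} (hab : a ≤ b) {F F' : ℝ → ℝ}
    (hF : ∀ x ∈ Icc a b, HasDerivWithinAt F (F' x) (Icc a b) x)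
    (hF' : ContinuousOn F' (Icc a b)) :
    ∫ x in a..b, F' x = F b - F a := by
  refine intervalIntegral.integral_eq_sub_of_hasDeriv_right_of_le hab
    (fun x hx => (hF x hx).continuousWithinAt)
    (fun x hx => ((hF x (Ioo_subset_Icc_self hx)).hasDerivAt
      (Icc_mem_nhds hx.1 hx.2)).hasDerivWithinAt) ?_
  apply ContinuousOn.intervalIntegrable
  rwa [uIcc_of_le hab]

lemma contInt {a b : ℝ} (hab : a ≤ b) {f : ℝ → ℝ} (hf : ContinuousOn f (Icc a b)) :
    IntervalIntegrable f volume a b := by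
  apply ContinuousOn.intervalIntegrable; rwa [uIcc_of_le hab]

set_option maxHeartbeats 2000000 in
lemma halfLemma (k : ℕ) (w w' : ℝ → ℝ)
    (hw : ∀ x ∈ Icc (0:ℝ) (1/2), HasDerivWithinAt w (w' x) (Icc (0:ℝ) (1/2)) x)
    (hc' : ContinuousOn w' (Icc (0:ℝ) (1/2))) :
    (∫ x in (0:ℝ)..(1/2), x ^ k * (w x)^2) ≤
      (16 * 4^(k+2) + 4) * ∫ x in (0:ℝ)..(1/2), x^(k+2) * ((w x)^2 + (w' x)^2) := by
  have hcw : ContinuousOn w (Icc (0:ℝ) (1/2)) := fun x hx => (hw x hx).continuousWithinAt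
  have h2 : (0:ℝ) ≤ 1/2 := by norm_num
  -- continuity of all integrands on Icc 0 (1/2)
  have cI : ContinuousOn (fun x : ℝ => x ^ k * (w x)^2) (Icc 0 (1/2)) := by fun_prop
  have cJ : ContinuousOn (fun x : ℝ => x ^ (k+1) * (w x * w' x)) (Icc 0 (1/2)) := by fun_prop
  have cK : ContinuousOn (fun x : ℝ => x ^ (k+2) * (w' x)^2) (Icc 0 (1/2)) := by fun_prop
  have cK0 : ContinuousOn (fun x : ℝ => x ^ (k+2) * (w x)^2) (Icc 0 (1/2)) := by fun_prop
  have cR : ContinuousOn (fun x : ℝ => x ^ (k+2) * ((w x)^2 + (w' x)^2)) (Icc 0 (1/2)) := by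
    fun_prop
  set I := ∫ x in (0:ℝ)..(1/2), x ^ k * (w x)^2 with hI
  set J := ∫ x in (0:ℝ)..(1/2), x ^ (k+1) * (w x * w' x) with hJ
  set K := ∫ x in (0:ℝ)..(1/2), x ^ (k+2) * (w' x)^2 with hK
  set R := ∫ x in (0:ℝ)..(1/2), x ^ (k+2) * ((w x)^2 + (w' x)^2) with hR
  set D := ∫ x in (1/4:ℝ)..(1/2), ((w x)^2 + (w' x)^2) with hD
  -- Step A : FTC identity
  have stepA : ((k:ℝ)+1) * I + 2 * J = (1/2)^(k+1) * (w (1/2))^2 := by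
    have hder : ∀ x ∈ Icc (0:ℝ) (1/2),
        HasDerivWithinAt (fun x => x^(k+1) * (w x)^2)
          (((k:ℝ)+1) * (x ^ k * (w x)^2) + 2 * (x ^ (k+1) * (w x * w' x)))
          (Icc 0 (1/2)) x := by
      intro x hx
      have h1 : HasDerivWithinAt (fun x : ℝ => x^(k+1)) (((k:ℝ)+1) * x^k) (Icc 0 (1/2)) x := by
        simpa using (hasDerivAt_pow (k+1) x).hasDerivWithinAt
      have h2' : HasDerivWithinAt (fun x => (w x)^2) (2 * w x * w' x) (Icc 0 (1/2)) x := by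
        simpa using (hw x hx).fun_pow 2
      have := h1.mul h2'
      exact this.congr_deriv (by ring)
    have := myFTC h2 hder (by fun_prop)
    rw [intervalIntegral.integral_add (contInt h2 (by fun_prop)) (contInt h2 (by fun_prop)),
      intervalIntegral.integral_const_mul, intervalIntegral.integral_const_mul] at this
    rw [this]
    simp
  -- Step B : absorption inequality
  have stepB : -(2 * J) ≤ (((k:ℝ)+1)/2) * I + (2/((k:ℝ)+1)) * K := by
    have he : (0:ℝ) < ((k:ℝ)+1)/2 := by positivity
    rw [hJ, hI, hK, ← intervalIntegral.integral_const_mul, ← intervalIntegral.integral_const_mul,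
      ← intervalIntegral.integral_neg, ← intervalIntegral.integral_const_mul,
      ← intervalIntegral.integral_add (contInt h2 (by fun_prop)) (contInt h2 (by fun_prop))]
    apply intervalIntegral.integral_mono_on h2
      (by exact contInt h2 (by fun_prop)) (by exact contInt h2 (by fun_prop))
    intro x hx
    have hx0 : (0:ℝ) ≤ x := hx.1
    have hxk : (0:ℝ) ≤ x ^ k := pow_nonneg hx0 k
    have hsq : 0 ≤ x ^ k * ((((k:ℝ)+1)) * w x + 2 * (x * w' x))^2 :=
      mul_nonneg hxk (sq_nonneg _)
    have e1 : x ^ (k+1) = x ^ k * x := pow_succ x k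
    have e2 : x ^ (k+2) = x ^ k * x * x := by rw [pow_succ, pow_succ]
    rw [e1, e2]
    have hk1 : (0:ℝ) < (k:ℝ)+1 := by positivity
    rw [← mul_le_mul_iff_of_pos_right (show (0:ℝ) < 2*((k:ℝ)+1) by positivity)]
    field_simp
    nlinarith [hsq]
  have q1 : (1:ℝ)/4 ≤ 1/2 := by norm_num
  have hsub : Icc (1/4:ℝ) (1/2) ⊆ Icc 0 (1/2) := Icc_subset_Icc (by norm_num) le_rfl
  have hD0 : 0 ≤ D := by
    rw [hD]
    exact intervalIntegral.integral_nonneg q1 (fun x hx => by positivity)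
  have hI0 : 0 ≤ I := by
    rw [hI]
    exact intervalIntegral.integral_nonneg h2
      (fun x hx => mul_nonneg (pow_nonneg hx.1 _) (sq_nonneg _))
  have hK0 : 0 ≤ K := by
    rw [hK]
    exact intervalIntegral.integral_nonneg h2
      (fun x hx => mul_nonneg (pow_nonneg hx.1 _) (sq_nonneg _))
  -- Step C : boundary value control
  have bdry : ∀ y ∈ Icc (1/4:ℝ) (1/2), (w (1/2))^2 ≤ (w y)^2 + D := by
    intro y hy
    have hy2 : y ≤ 1/2 := hy.2
    have hsub2 : Icc y (1/2:ℝ) ⊆ Icc 0 (1/2) :=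
      Icc_subset_Icc (le_trans (by norm_num) hy.1) le_rfl
    have csum : ContinuousOn (fun x => (w x)^2 + (w' x)^2) (Icc (0:ℝ) (1/2)) := by fun_prop
    have ftc2 : ∫ x in y..(1/2:ℝ), 2 * (w x * w' x) = (w (1/2))^2 - (w y)^2 := by
      apply myFTC hy2 (F := fun x => (w x)^2)
      · intro x hx
        have := ((hw x (hsub2 hx)).mono hsub2).fun_pow 2
        exact this.congr_deriv (by push_cast; ring)
      · exact (by fun_prop : ContinuousOn (fun x => 2*(w x * w' x)) (Icc (0:ℝ) (1/2))).mono hsub2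
    have mono1 : ∫ x in y..(1/2:ℝ), 2 * (w x * w' x) ≤
        ∫ x in y..(1/2:ℝ), ((w x)^2 + (w' x)^2) := by
      apply intervalIntegral.integral_mono_on hy2
        (contInt hy2 ((by fun_prop : ContinuousOn (fun x => 2*(w x * w' x))
          (Icc (0:ℝ) (1/2))).mono hsub2))
        (contInt hy2 (csum.mono hsub2))
      intro x hx
      nlinarith [sq_nonneg (w x - w' x)]
    have mono2 : ∫ x in y..(1/2:ℝ), ((w x)^2 + (w' x)^2) ≤ D := by
      have hsub3 : Icc (1/4:ℝ) y ⊆ Icc 0 (1/2) :=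
        Icc_subset_Icc (by norm_num) hy2
      have split := intervalIntegral.integral_add_adjacent_intervals
        (contInt hy.1 (csum.mono hsub3)) (contInt hy2 (csum.mono hsub2))
        (f := fun x => (w x)^2 + (w' x)^2)
      have pos1 : 0 ≤ ∫ x in (1/4:ℝ)..y, ((w x)^2 + (w' x)^2) :=
        intervalIntegral.integral_nonneg hy.1 (fun x hx => by positivity)
      rw [hD]
      linarith
    linarith
  have intw2 : IntervalIntegrable (fun y => (w y)^2 + D) volume (1/4:ℝ) (1/2) :=
    contInt q1 (((hcw.mono hsub).pow 2).add continuousOn_const)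
  have q3 : (1/4:ℝ) * (w (1/2))^2 ≤ (∫ y in (1/4:ℝ)..(1/2), (w y)^2) + (1/4) * D := by
    have := intervalIntegral.integral_mono_on q1 intervalIntegrable_const intw2 bdry
    rw [intervalIntegral.integral_const,
      intervalIntegral.integral_add (contInt q1 ((hcw.mono hsub).fun_pow 2))
        intervalIntegrable_const, intervalIntegral.integral_const] at this
    rw [smul_eq_mul, smul_eq_mul] at this
    norm_num at this ⊢
    linarith
  have q4 : (∫ y in (1/4:ℝ)..(1/2), (w y)^2) ≤ D := by
    rw [hD]
    apply intervalIntegral.integral_mono_on q1 (contInt q1 ((hcw.mono hsub).fun_pow 2))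
      (contInt q1 (by exact ((hcw.mono hsub).pow 2).add ((hc'.mono hsub).pow 2)))
    intro x hx
    nlinarith [sq_nonneg (w' x)]
  have hbd : (w (1/2))^2 ≤ 8 * D := by linarith
  -- Step D : compare D with weighted integral
  have q5 : D ≤ (4:ℝ)^(k+2) * R := by
    have hmid : D ≤ (4:ℝ)^(k+2) * ∫ x in (1/4:ℝ)..(1/2), x^(k+2) * ((w x)^2 + (w' x)^2) := by
      rw [← intervalIntegral.integral_const_mul, hD]
      apply intervalIntegral.integral_mono_on q1
        (contInt q1 (by exact ((hcw.mono hsub).pow 2).add ((hc'.mono hsub).pow 2)))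
        (contInt q1 ((continuousOn_const).mul (cR.mono hsub)))
      intro x hx
      have h4x : (1:ℝ) ≤ 4 * x := by linarith [hx.1]
      have hone : (1:ℝ) ≤ (4*x)^(k+2) := by
        calc (1:ℝ) = 1^(k+2) := (one_pow _).symm
        _ ≤ (4*x)^(k+2) := pow_le_pow_left₀ zero_le_one h4x (k+2)
      rw [mul_pow] at hone
      have hnn : (0:ℝ) ≤ (w x)^2 + (w' x)^2 := by positivity
      calc (w x)^2 + (w' x)^2 = 1 * ((w x)^2 + (w' x)^2) := (one_mul _).symm
        _ ≤ ((4:ℝ)^(k+2) * x^(k+2)) * ((w x)^2 + (w' x)^2) :=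
            mul_le_mul_of_nonneg_right hone hnn
        _ = (4:ℝ)^(k+2) * (x^(k+2) * ((w x)^2 + (w' x)^2)) := by ring
    have q6 : (∫ x in (1/4:ℝ)..(1/2), x^(k+2) * ((w x)^2 + (w' x)^2)) ≤ R := by
      have h14 : (0:ℝ) ≤ 1/4 := by norm_num
      have hsubL : Icc (0:ℝ) (1/4) ⊆ Icc 0 (1/2) := Icc_subset_Icc le_rfl (by norm_num)
      have split := intervalIntegral.integral_add_adjacent_intervals
        (contInt h14 (cR.mono hsubL)) (contInt q1 (cR.mono hsub))
        (f := fun x => x^(k+2) * ((w x)^2 + (w' x)^2))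
      have pos1 : 0 ≤ ∫ x in (0:ℝ)..(1/4), x^(k+2) * ((w x)^2 + (w' x)^2) :=
        intervalIntegral.integral_nonneg h14
          (fun x hx => mul_nonneg (pow_nonneg hx.1 _) (by positivity))
      rw [hR]
      linarith
    have h4pos : (0:ℝ) < (4:ℝ)^(k+2) := by positivity
    calc D ≤ (4:ℝ)^(k+2) * ∫ x in (1/4:ℝ)..(1/2), x^(k+2) * ((w x)^2 + (w' x)^2) := hmid
      _ ≤ (4:ℝ)^(k+2) * R := by
          exact mul_le_mul_of_nonneg_left q6 (le_of_lt h4pos)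
  -- Step E : combine
  have hKR : K ≤ R := by
    have hsplit : R = (∫ x in (0:ℝ)..(1/2), x^(k+2) * (w x)^2) + K := by
      rw [hR, hK, ← intervalIntegral.integral_add (contInt h2 cK0) (contInt h2 cK)]
      congr 1
      ext x
      ring
    have pos0 : 0 ≤ ∫ x in (0:ℝ)..(1/2), x^(k+2) * (w x)^2 :=
      intervalIntegral.integral_nonneg h2
        (fun x hx => mul_nonneg (pow_nonneg hx.1 _) (sq_nonneg _))
    linarith
  have hR0 : 0 ≤ R := le_trans hK0 hKR
  have hk1 : (1:ℝ) ≤ (k:ℝ)+1 := by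
    have : (0:ℝ) ≤ (k:ℝ) := Nat.cast_nonneg k
    linarith
  have hB' : (1/2:ℝ)^(k+1) * (w (1/2))^2 ≤ 8 * D := by
    have hp : (1/2:ℝ)^(k+1) ≤ 1 := by
      apply pow_le_one₀ <;> norm_num
    nlinarith [sq_nonneg (w (1/2))]
  -- from stepA and stepB:
  have habs : (((k:ℝ)+1)/2) * I ≤ 8 * D + (2/((k:ℝ)+1)) * K := by
    have h1 : ((k:ℝ)+1) * I = (1/2:ℝ)^(k+1) * (w (1/2))^2 + (-(2*J)) := by linarith [stepA]
    linarith [stepB, hB']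
  have hhalf : (1/2:ℝ) * I ≤ (((k:ℝ)+1)/2) * I := by nlinarith
  have hfrac : (2/((k:ℝ)+1)) * K ≤ 2 * K := by
    have : (2/((k:ℝ)+1)) ≤ 2 := by
      rw [div_le_iff₀ (by linarith : (0:ℝ) < (k:ℝ)+1)]
      nlinarith
    exact mul_le_mul_of_nonneg_right this hK0
  have final : I ≤ 16 * D + 4 * K := by linarith
  have h4pos : (0:ℝ) < (4:ℝ)^(k+2) := by positivity
  calc I ≤ 16 * D + 4 * K := final
    _ ≤ 16 * ((4:ℝ)^(k+2) * R) + 4 * R := by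
        have := mul_le_mul_of_nonneg_left q5 (by norm_num : (0:ℝ) ≤ 16)
        linarith [hKR]
    _ = (16 * 4^(k+2) + 4) * R := by ring

set_option maxHeartbeats 1000000

/-- Weighted Sobolev (Hardy-type) inequality (3.2) of the paper: with
`d x = min x (1-x)` the distance to the boundary of `(0,1)`, for each `k ∈ ℕ`
there is `C = C(k)` with `∫₀¹ d^k w² ≤ C ∫₀¹ d^{k+2} (w² + w'²)`
for all `w ∈ C¹([0,1])`. -/
theorem weighted_sobolev_inequality (k : ℕ) :
    ∃ C : ℝ, 0 < C ∧
      ∀ w w' : ℝ → ℝ,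
        (∀ x ∈ Icc (0:ℝ) 1, HasDerivWithinAt w (w' x) (Icc (0:ℝ) 1) x) →
        ContinuousOn w' (Icc (0:ℝ) 1) →
        (∫ x in (0:ℝ)..1, (min x (1 - x)) ^ k * (w x) ^ 2) ≤
          C * ∫ x in (0:ℝ)..1, (min x (1 - x)) ^ (k + 2) * ((w x) ^ 2 + (w' x) ^ 2) := by
  refine ⟨16 * 4^(k+2) + 4, by positivity, ?_⟩
  intro w w' hw hc'
  have hs : Icc (0:ℝ) (1/2) ⊆ Icc 0 1 := Icc_subset_Icc le_rfl (by norm_num)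
  have hw1 : ∀ x ∈ Icc (0:ℝ) (1/2), HasDerivWithinAt w (w' x) (Icc (0:ℝ) (1/2)) x :=
    fun x hx => (hw x (hs hx)).mono hs
  have hc1 : ContinuousOn w' (Icc (0:ℝ) (1/2)) := hc'.mono hs
  have hcw : ContinuousOn w (Icc (0:ℝ) 1) := fun x hx => (hw x hx).continuousWithinAt
  have H1 := halfLemma k w w' hw1 hc1
  -- reflected function
  set v : ℝ → ℝ := fun x => w (1-x) with hv
  set v' : ℝ → ℝ := fun x => -w' (1-x) with hv'
  have hmap : MapsTo (fun x : ℝ => 1-x) (Icc (0:ℝ) (1/2)) (Icc (0:ℝ) 1) := by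
    intro x hx
    simp only [mem_Icc] at hx ⊢
    constructor <;> linarith
  have hvd : ∀ x ∈ Icc (0:ℝ) (1/2), HasDerivWithinAt v (v' x) (Icc (0:ℝ) (1/2)) x := by
    intro x hx
    have haff : HasDerivWithinAt (fun x : ℝ => 1-x) (-1) (Icc (0:ℝ) (1/2)) x :=
      ((hasDerivAt_id x).const_sub 1).hasDerivWithinAt
    have hcomp := (hw (1-x) (hmap hx)).comp x haff hmap
    exact hcomp.congr_deriv (by simp [hv'])
  have hvc : ContinuousOn v' (Icc (0:ℝ) (1/2)) := by
    apply ContinuousOn.neg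
    exact hc'.comp (by fun_prop) hmap
  have H2 := halfLemma k v v' hvd hvc
  -- change of variables in H2
  have cov1 : (∫ x in (0:ℝ)..(1/2), x ^ k * (v x)^2)
      = ∫ x in (1/2:ℝ)..1, (1-x)^k * (w x)^2 := by
    have h := intervalIntegral.integral_comp_sub_left (a := (0:ℝ)) (b := 1/2)
      (fun x => (1-x)^k * (w x)^2) 1
    simp only [sub_sub_cancel] at h
    norm_num at h
    exact h
  have cov2 : (∫ x in (0:ℝ)..(1/2), x ^ (k+2) * ((v x)^2 + (v' x)^2))
      = ∫ x in (1/2:ℝ)..1, (1-x)^(k+2) * ((w x)^2 + (w' x)^2) := by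
    have h := intervalIntegral.integral_comp_sub_left (a := (0:ℝ)) (b := 1/2)
      (fun x => (1-x)^(k+2) * ((w x)^2 + (w' x)^2)) 1
    simp only [sub_sub_cancel] at h
    norm_num at h
    rw [← h]
    apply intervalIntegral.integral_congr
    intro x hx
    simp [hv, hv']
  rw [cov1] at H2
  rw [cov2] at H2
  -- splitting the full integrals at 1/2
  have h02 : (0:ℝ) ≤ 1/2 := by norm_num
  have h21 : (1/2:ℝ) ≤ 1 := by norm_num
  have hsub2 : Icc (1/2:ℝ) 1 ⊆ Icc 0 1 := Icc_subset_Icc (by norm_num) le_rfl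
  have cmin : ContinuousOn (fun x : ℝ => min x (1-x)) (Icc (0:ℝ) 1) := by fun_prop
  have c1 : ContinuousOn (fun x : ℝ => (min x (1-x))^k * (w x)^2) (Icc (0:ℝ) 1) := by fun_prop
  have c2 : ContinuousOn (fun x : ℝ => (min x (1-x))^(k+2) * ((w x)^2 + (w' x)^2))
      (Icc (0:ℝ) 1) := by fun_prop
  have splitL := intervalIntegral.integral_add_adjacent_intervals
    (contInt h02 (c1.mono hs)) (contInt h21 (c1.mono hsub2))
  have splitR := intervalIntegral.integral_add_adjacent_intervals
    (contInt h02 (c2.mono hs)) (contInt h21 (c2.mono hsub2))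
  have congrL1 : (∫ x in (0:ℝ)..(1/2), (min x (1-x))^k * (w x)^2)
      = ∫ x in (0:ℝ)..(1/2), x^k * (w x)^2 := by
    apply intervalIntegral.integral_congr
    intro x hx
    rw [uIcc_of_le h02] at hx
    show (min x (1-x))^k * (w x)^2 = x^k * (w x)^2
    rw [min_eq_left (by linarith [hx.2])]
  have congrL2 : (∫ x in (1/2:ℝ)..1, (min x (1-x))^k * (w x)^2)
      = ∫ x in (1/2:ℝ)..1, (1-x)^k * (w x)^2 := by
    apply intervalIntegral.integral_congr
    intro x hx
    rw [uIcc_of_le h21] at hx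
    show (min x (1-x))^k * (w x)^2 = (1-x)^k * (w x)^2
    rw [min_eq_right (by linarith [hx.1])]
  have congrR1 : (∫ x in (0:ℝ)..(1/2), (min x (1-x))^(k+2) * ((w x)^2 + (w' x)^2))
      = ∫ x in (0:ℝ)..(1/2), x^(k+2) * ((w x)^2 + (w' x)^2) := by
    apply intervalIntegral.integral_congr
    intro x hx
    rw [uIcc_of_le h02] at hx
    show (min x (1-x))^(k+2) * ((w x)^2 + (w' x)^2) = x^(k+2) * ((w x)^2 + (w' x)^2)
    rw [min_eq_left (by linarith [hx.2])]
  have congrR2 : (∫ x in (1/2:ℝ)..1, (min x (1-x))^(k+2) * ((w x)^2 + (w' x)^2))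
      = ∫ x in (1/2:ℝ)..1, (1-x)^(k+2) * ((w x)^2 + (w' x)^2) := by
    apply intervalIntegral.integral_congr
    intro x hx
    rw [uIcc_of_le h21] at hx
    show (min x (1-x))^(k+2) * ((w x)^2 + (w' x)^2) = (1-x)^(k+2) * ((w x)^2 + (w' x)^2)
    rw [min_eq_right (by linarith [hx.1])]
  rw [← splitL, ← splitR, congrL1, congrL2, congrR1, congrR2, mul_add]
  exact add_le_add H1 H2
end

section
/- Let ρ₀(x) = min(x, 1-x) on I = (0,1), and let v ∈ C^6(I) ∩ C([0,1]). Define E = ∫_I ρ₀²(v² + vₓ²) dx + Σ_{k=2}^{6} ∫_I ρ₀^k (∂ₓ^k v)² dx. Then there is an absolute constant C with ‖v‖²_{H³(I)} ≤ C·E. -/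
open Set MeasureTheory

open intervalIntegral in
set_option maxHeartbeats 1000000 in
lemma hardy_left (m : ℕ) (w w' : ℝ → ℝ)
    (hw : ContinuousOn w (Icc 0 1)) (hw' : ContinuousOn w' (Icc 0 1))
    (hd : ∀ x ∈ Ioo (0:ℝ) 1, HasDerivAt w (w' x) x) :
    ∫ x in (0:ℝ)..(1/2), x^(2*m) * w x ^2 ≤
      2^(4*m+9) * ∫ x in (0:ℝ)..(1/2), x^(2*m+2) * (w x ^2 + w' x ^2) := by
  have h01 : Icc (0:ℝ) (1/2) ⊆ Icc 0 1 := Icc_subset_Icc le_rfl (by norm_num)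
  have h41 : Icc (1/4:ℝ) (1/2) ⊆ Icc 0 1 := Icc_subset_Icc (by norm_num) (by norm_num)
  have hwc : ContinuousOn (fun x => w x ^ 2) (Icc (0:ℝ) 1) := hw.pow 2
  have hwc' : ContinuousOn (fun x => w' x ^ 2) (Icc (0:ℝ) 1) := hw'.pow 2
  have hs : ContinuousOn (fun x => w x ^2 + w' x ^2) (Icc (0:ℝ) 1) := hwc.add hwc'
  -- integrability helper
  have hint : ∀ (n : ℕ) (g : ℝ → ℝ), ContinuousOn g (Icc (0:ℝ) 1) →
      ∀ a b : ℝ, a ≤ b → Icc a b ⊆ Icc 0 1 →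
      IntervalIntegrable (fun x => x ^ n * g x) volume a b := by
    intro n g hg a b hab hsub
    apply ContinuousOn.intervalIntegrable
    rw [uIcc_of_le hab]
    exact ((continuous_pow n).continuousOn).mul (hg.mono hsub)
  set J := ∫ x in (0:ℝ)..(1/2), x^(2*m+2) * (w x ^2 + w' x ^2) with hJdef
  have hJint : IntervalIntegrable (fun x => x^(2*m+2) * (w x ^2 + w' x ^2)) volume 0 (1/2) :=
    hint _ _ hs _ _ (by norm_num) h01
  have hJ0 : 0 ≤ J := intervalIntegral.integral_nonneg (by norm_num)
    (fun x hx => mul_nonneg (pow_nonneg hx.1 _) (by positivity))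
  -- FTC
  have hFTC : ∫ x in (0:ℝ)..(1/2), ((2*m+1:ℝ) * x^(2*m) * w x ^2 + x^(2*m+1) * (2 * w x * w' x))
      = (1/2:ℝ)^(2*m+1) * w (1/2) ^2 := by
    have key := intervalIntegral.integral_eq_sub_of_hasDeriv_right_of_le
      (f := fun x => x^(2*m+1) * w x ^2)
      (f' := fun x => (2*m+1:ℝ) * x^(2*m) * w x ^2 + x^(2*m+1) * (2 * w x * w' x))
      (by norm_num : (0:ℝ) ≤ 1/2)
      (((continuous_pow (2*m+1)).continuousOn).mul (hwc.mono h01))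
      (fun x hx => by
        have hx1 : x ∈ Ioo (0:ℝ) 1 := ⟨hx.1, hx.2.trans (by norm_num)⟩
        have hq : HasDerivAt (fun x => w x ^2) (2 * w x * w' x) x := by
          simpa using (hd x hx1).fun_pow 2
        have hp : HasDerivAt (fun x : ℝ => x^(2*m+1)) ((2*m+1:ℝ) * x^(2*m)) x := by
          simpa using hasDerivAt_pow (2*m+1) x
        have := hp.mul hq
        exact (this.congr_deriv (by ring)).hasDerivWithinAt)
      (by
        apply ContinuousOn.intervalIntegrable
        rw [uIcc_of_le (by norm_num : (0:ℝ) ≤ 1/2)]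
        apply ContinuousOn.add
        · exact (continuousOn_const.mul (continuous_pow (2*m)).continuousOn).mul (hwc.mono h01)
        · exact ((continuous_pow (2*m+1)).continuousOn).mul
            ((continuousOn_const.mul (hw.mono h01)).mul (hw'.mono h01)))
    simpa [zero_pow] using key
  -- boundary value bound
  have hy01 : ∀ y : ℝ, y ∈ Icc (1/4:ℝ) (1/2) → Icc y (1/2:ℝ) ⊆ Icc (0:ℝ) 1 :=
    fun y hy => Icc_subset_Icc (le_trans (by norm_num) hy.1) (by norm_num)
  have hSint : IntervalIntegrable (fun x => w x ^2 + w' x ^2) volume (1/4) (1/2) := by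
    apply ContinuousOn.intervalIntegrable
    rw [uIcc_of_le (by norm_num : (1/4:ℝ) ≤ 1/2)]
    exact hs.mono h41
  have hw2int : IntervalIntegrable (fun x => w x ^2) volume (1/4) (1/2) := by
    apply ContinuousOn.intervalIntegrable
    rw [uIcc_of_le (by norm_num : (1/4:ℝ) ≤ 1/2)]
    exact hwc.mono h41
  have hbd : w (1/2:ℝ) ^2 ≤ 5 * ∫ x in (1/4:ℝ)..(1/2), (w x ^2 + w' x ^2) := by
    obtain ⟨y, hy, hymin⟩ := (isCompact_Icc : IsCompact (Icc (1/4:ℝ) (1/2))).exists_isMinOn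
      (nonempty_Icc.mpr (by norm_num)) ((hw.mono h41).pow 2)
    have hFTC2 : ∫ x in y..(1/2:ℝ), 2 * w x * w' x = w (1/2:ℝ) ^2 - w y ^2 := by
      have key2 := intervalIntegral.integral_eq_sub_of_hasDeriv_right_of_le
        (f := fun x => w x ^2) (f' := fun x => 2 * w x * w' x) hy.2
        (hwc.mono (hy01 y hy))
        (fun x hx => by
          have hx1 : x ∈ Ioo (0:ℝ) 1 :=
            ⟨lt_of_lt_of_le (by norm_num) (hy.1.trans hx.1.le), hx.2.trans (by norm_num)⟩
          have hq : HasDerivAt (fun x => w x ^2) (2 * w x * w' x) x := by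
            simpa using (hd x hx1).fun_pow 2
          exact hq.hasDerivWithinAt)
        (by
          apply ContinuousOn.intervalIntegrable
          rw [uIcc_of_le hy.2]
          exact (continuousOn_const.mul (hw.mono (hy01 y hy))).mul (hw'.mono (hy01 y hy)))
      simpa using key2
    have hcross_int : IntervalIntegrable (fun x => 2 * w x * w' x) volume y (1/2) := by
      apply ContinuousOn.intervalIntegrable
      rw [uIcc_of_le hy.2]
      exact (continuousOn_const.mul (hw.mono (hy01 y hy))).mul (hw'.mono (hy01 y hy))
    have hIy : ∫ x in y..(1/2:ℝ), 2 * w x * w' x ≤ ∫ x in y..(1/2:ℝ), (w x ^2 + w' x ^2) := by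
      apply intervalIntegral.integral_mono_on hy.2 hcross_int
        (hSint.mono_set (by rw [uIcc_of_le hy.2, uIcc_of_le (by norm_num : (1/4:ℝ) ≤ 1/2)]; exact Icc_subset_Icc hy.1 le_rfl))
      intro x hx; nlinarith [sq_nonneg (w x - w' x)]
    have hext : ∫ x in y..(1/2:ℝ), (w x ^2 + w' x ^2) ≤ ∫ x in (1/4:ℝ)..(1/2), (w x ^2 + w' x ^2) :=
      intervalIntegral.integral_mono_interval hy.1 hy.2 le_rfl
        (Filter.Eventually.of_forall fun x => by positivity) hSint
    have hmin : w y ^2 * (1/4) ≤ ∫ x in (1/4:ℝ)..(1/2), w x ^2 := by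
      have h := intervalIntegral.integral_mono_on (by norm_num : (1/4:ℝ) ≤ 1/2)
        intervalIntegrable_const hw2int (fun x hx => hymin hx)
      rw [intervalIntegral.integral_const] at h
      have : ((1:ℝ)/2 - 1/4) • w y ^2 = w y ^2 * (1/4) := by
        rw [smul_eq_mul]; ring
      linarith [this ▸ h]
    have h4 : ∫ x in (1/4:ℝ)..(1/2), w x ^2 ≤ ∫ x in (1/4:ℝ)..(1/2), (w x ^2 + w' x ^2) := by
      apply intervalIntegral.integral_mono_on (by norm_num) hw2int hSint
      intro x hx; nlinarith [sq_nonneg (w' x)]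
    linarith
  -- interior integral vs weighted J
  have hQJ : ∫ x in (1/4:ℝ)..(1/2), (w x ^2 + w' x ^2) ≤ 4^(2*m+2) * J := by
    have hwt : IntervalIntegrable (fun x => 4^(2*m+2) * (x^(2*m+2) * (w x ^2 + w' x ^2))) volume (1/4) (1/2) :=
      ((hint _ _ hs _ _ (by norm_num) h41).const_mul (4^(2*m+2) : ℝ))
    have step1 : ∫ x in (1/4:ℝ)..(1/2), (w x ^2 + w' x ^2)
        ≤ ∫ x in (1/4:ℝ)..(1/2), 4^(2*m+2) * (x^(2*m+2) * (w x ^2 + w' x ^2)) := by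
      apply intervalIntegral.integral_mono_on (by norm_num) hSint hwt
      intro x hx
      have h1 : (1:ℝ) ≤ (4*x)^(2*m+2) := one_le_pow₀ (by linarith [hx.1])
      calc w x ^2 + w' x ^2 = 1 * (w x ^2 + w' x ^2) := by ring
        _ ≤ (4*x)^(2*m+2) * (w x ^2 + w' x ^2) :=
            mul_le_mul_of_nonneg_right h1 (by positivity)
        _ = 4^(2*m+2) * (x^(2*m+2) * (w x ^2 + w' x ^2)) := by rw [mul_pow]; ring
    rw [intervalIntegral.integral_const_mul] at step1
    have hnn : ∀ x : ℝ, 0 ≤ x^(2*m+2) * (w x ^2 + w' x ^2) := fun x =>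
      mul_nonneg ((by exact ⟨m+1, by ring⟩ : Even (2*m+2)).pow_nonneg x) (by positivity)
    have step2 : ∫ x in (1/4:ℝ)..(1/2), x^(2*m+2) * (w x ^2 + w' x ^2) ≤ J :=
      intervalIntegral.integral_mono_interval (by norm_num) (by norm_num) le_rfl
        (Filter.Eventually.of_forall hnn) hJint
    calc ∫ x in (1/4:ℝ)..(1/2), (w x ^2 + w' x ^2)
        ≤ 4^(2*m+2) * ∫ x in (1/4:ℝ)..(1/2), x^(2*m+2) * (w x ^2 + w' x ^2) := step1
      _ ≤ 4^(2*m+2) * J := by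
          apply mul_le_mul_of_nonneg_left step2 (by positivity)
  -- name the pieces
  set IA := ∫ x in (0:ℝ)..(1/2), x^(2*m) * w x ^2 with hIA
  set IB := ∫ x in (0:ℝ)..(1/2), x^(2*m+2) * w' x ^2 with hIB
  set IP := ∫ x in (0:ℝ)..(1/2), x^(2*m+1) * (2 * w x * w' x) with hIP
  have hIAint : IntervalIntegrable (fun x => x^(2*m) * w x ^2) volume 0 (1/2) :=
    hint _ _ hwc _ _ (by norm_num) h01
  have hIBint : IntervalIntegrable (fun x => x^(2*m+2) * w' x ^2) volume 0 (1/2) :=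
    hint _ _ hwc' _ _ (by norm_num) h01
  have hIPint : IntervalIntegrable (fun x => x^(2*m+1) * (2 * w x * w' x)) volume 0 (1/2) :=
    hint _ _ ((continuousOn_const.mul hw).mul hw') _ _ (by norm_num) h01
  have hIA0 : 0 ≤ IA := intervalIntegral.integral_nonneg (by norm_num)
    (fun x hx => mul_nonneg (pow_nonneg hx.1 _) (sq_nonneg _))
  have hIBJ : IB ≤ J := by
    apply intervalIntegral.integral_mono_on (by norm_num) hIBint hJint
    intro x hx
    apply mul_le_mul_of_nonneg_left (by nlinarith [sq_nonneg (w x)]) (pow_nonneg hx.1 _)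
  -- split the FTC integral
  have hsplit : (2*(m:ℝ)+1) * IA + IP = (1/2:ℝ)^(2*m+1) * w (1/2) ^2 := by
    rw [← hFTC, ← intervalIntegral.integral_const_mul]
    rw [← intervalIntegral.integral_add (hIAint.const_mul _) hIPint]
    apply intervalIntegral.integral_congr
    intro x hx; simp only []; ring
  -- lower bound on IP
  have hIPlow : -((1/2) * IA + 2 * IB) ≤ IP := by
    have hmono : (∫ x in (0:ℝ)..(1/2),
        ((-(1/2):ℝ) * (x^(2*m) * w x ^2) + (-2:ℝ) * (x^(2*m+2) * w' x ^2))) ≤ IP := by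
      apply intervalIntegral.integral_mono_on (by norm_num : (0:ℝ) ≤ 1/2)
        ((hIAint.const_mul (-(1/2))).add (hIBint.const_mul (-2))) hIPint
      intro x hx
      have e1 : x^(2*m) = (x^m)^2 := by rw [← pow_mul]; congr 1; ring
      have e2 : x^(2*m+2) = (x^(m+1))^2 := by rw [← pow_mul]; congr 1; ring
      have e3 : x^(2*m+1) = x^m * x^(m+1) := by rw [← pow_add]; congr 1; ring
      rw [e1, e2, e3]
      nlinarith [sq_nonneg ((1/2) * (x^m * w x) + x^(m+1) * w' x)]
    rw [intervalIntegral.integral_add (hIAint.const_mul (-(1/2))) (hIBint.const_mul (-2)),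
      intervalIntegral.integral_const_mul, intervalIntegral.integral_const_mul] at hmono
    linarith [hmono]
  -- combine
  have hR : (1/2:ℝ)^(2*m+1) * w (1/2) ^2 ≤ 5 * (4^(2*m+2) * J) := by
    have h1 : (1/2:ℝ)^(2*m+1) ≤ 1 := pow_le_one₀ (by norm_num) (by norm_num)
    have h2 : (0:ℝ) ≤ w (1/2) ^2 := sq_nonneg _
    nlinarith [hbd, hQJ]
  have hIAfin : IA ≤ 10 * 4^(2*m+2) * J + 4 * J := by nlinarith [hsplit, hIPlow, hIBJ, hIA0, hR, hJ0]
  have h4e : (4:ℝ)^(2*m+2) = 2^(4*m+4) := by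
    rw [show (4:ℝ) = 2^2 by norm_num, ← pow_mul]; congr 1; ring
  have h2e : (2:ℝ)^(4*m+9) = 32 * 2^(4*m+4) := by rw [pow_add]; ring
  have hone : (1:ℝ) ≤ 2^(4*m+4) := one_le_pow₀ (by norm_num)
  rw [h4e] at hIAfin
  rw [h2e]
  nlinarith [mul_nonneg (by linarith : (0:ℝ) ≤ 22 * 2^(4*m+4) - 4) hJ0]

set_option maxHeartbeats 1000000 in
lemma hardy_full (m : ℕ) (w w' : ℝ → ℝ)
    (hw : ContinuousOn w (Icc 0 1)) (hw' : ContinuousOn w' (Icc 0 1))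
    (hd : ∀ x ∈ Ioo (0:ℝ) 1, HasDerivAt w (w' x) x) :
    ∫ x in (0:ℝ)..1, (min x (1-x))^(2*m) * w x ^2 ≤
      2^(4*m+10) * ∫ x in (0:ℝ)..1, (min x (1-x))^(2*m+2) * (w x ^2 + w' x ^2) := by
  have hmin_c : Continuous (fun x : ℝ => min x (1-x)) :=
    continuous_id.min (continuous_const.sub continuous_id)
  have hs : ContinuousOn (fun x => w x ^2 + w' x ^2) (Icc (0:ℝ) 1) := (hw.pow 2).add (hw'.pow 2)
  have hev : Even (2*m+2) := ⟨m+1, by ring⟩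
  have hnnJ : ∀ x : ℝ, 0 ≤ (min x (1-x))^(2*m+2) * (w x ^2 + w' x ^2) := fun x =>
    mul_nonneg (hev.pow_nonneg _) (by positivity)
  -- integrability of weighted integrands over subintervals of [0,1]
  have hint : ∀ (n : ℕ) (a b : ℝ), a ≤ b → Icc a b ⊆ Icc 0 1 →
      IntervalIntegrable (fun x => (min x (1-x))^n * (w x ^2)) volume a b := by
    intro n a b hab hsub
    apply ContinuousOn.intervalIntegrable
    rw [uIcc_of_le hab]
    exact ((hmin_c.pow n).continuousOn).mul ((hw.mono hsub).pow 2)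
  have hintS : ∀ (n : ℕ) (a b : ℝ), a ≤ b → Icc a b ⊆ Icc 0 1 →
      IntervalIntegrable (fun x => (min x (1-x))^n * (w x ^2 + w' x ^2)) volume a b := by
    intro n a b hab hsub
    apply ContinuousOn.intervalIntegrable
    rw [uIcc_of_le hab]
    exact ((hmin_c.pow n).continuousOn).mul (hs.mono hsub)
  set J := ∫ x in (0:ℝ)..1, (min x (1-x))^(2*m+2) * (w x ^2 + w' x ^2) with hJdef
  -- split at 1/2
  have hsplit : ∫ x in (0:ℝ)..1, (min x (1-x))^(2*m) * w x ^2
      = (∫ x in (0:ℝ)..(1/2), (min x (1-x))^(2*m) * w x ^2)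
        + ∫ x in (1/2:ℝ)..1, (min x (1-x))^(2*m) * w x ^2 :=
    (intervalIntegral.integral_add_adjacent_intervals
      (hint _ _ _ (by norm_num) (Icc_subset_Icc le_rfl (by norm_num)))
      (hint _ _ _ (by norm_num) (Icc_subset_Icc (by norm_num) le_rfl))).symm
  -- LEFT PIECE
  have hminL : ∀ x ∈ Icc (0:ℝ) (1/2), min x (1-x) = x := fun x hx =>
    min_eq_left (by linarith [hx.2])
  have hLeq : ∫ x in (0:ℝ)..(1/2), (min x (1-x))^(2*m) * w x ^2
      = ∫ x in (0:ℝ)..(1/2), x^(2*m) * w x ^2 := by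
    apply intervalIntegral.integral_congr
    intro x hx
    rw [uIcc_of_le (by norm_num : (0:ℝ) ≤ 1/2)] at hx
    simp only [hminL x hx]
  have hLeq2 : ∫ x in (0:ℝ)..(1/2), x^(2*m+2) * (w x ^2 + w' x ^2)
      = ∫ x in (0:ℝ)..(1/2), (min x (1-x))^(2*m+2) * (w x ^2 + w' x ^2) := by
    apply intervalIntegral.integral_congr
    intro x hx
    rw [uIcc_of_le (by norm_num : (0:ℝ) ≤ 1/2)] at hx
    simp only [hminL x hx]
  have hJL : ∫ x in (0:ℝ)..(1/2), (min x (1-x))^(2*m+2) * (w x ^2 + w' x ^2) ≤ J :=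
    intervalIntegral.integral_mono_interval le_rfl (by norm_num) (by norm_num)
      (Filter.Eventually.of_forall hnnJ)
      (hintS _ _ _ (by norm_num) (Icc_subset_Icc le_rfl le_rfl))
  have hL : ∫ x in (0:ℝ)..(1/2), (min x (1-x))^(2*m) * w x ^2 ≤ 2^(4*m+9) * J := by
    rw [hLeq]
    calc ∫ x in (0:ℝ)..(1/2), x^(2*m) * w x ^2
        ≤ 2^(4*m+9) * ∫ x in (0:ℝ)..(1/2), x^(2*m+2) * (w x ^2 + w' x ^2) :=
          hardy_left m w w' hw hw' hd
      _ ≤ 2^(4*m+9) * J := by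
          apply mul_le_mul_of_nonneg_left _ (by positivity)
          rw [hLeq2]; exact hJL
  -- RIGHT PIECE via reflection
  set u : ℝ → ℝ := fun x => w (1-x) with hu
  set g : ℝ → ℝ := fun x => -(w' (1-x)) with hg
  have hrefl : MapsTo (fun x : ℝ => 1 - x) (Icc (0:ℝ) 1) (Icc (0:ℝ) 1) := by
    intro x hx
    simp only [mem_Icc] at hx ⊢
    constructor <;> linarith [hx.1, hx.2]
  have huc : ContinuousOn u (Icc (0:ℝ) 1) :=
    hw.comp ((continuous_const.sub continuous_id).continuousOn) hrefl
  have hgc : ContinuousOn g (Icc (0:ℝ) 1) :=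
    (hw'.comp ((continuous_const.sub continuous_id).continuousOn) hrefl).neg
  have hgd : ∀ x ∈ Ioo (0:ℝ) 1, HasDerivAt u (g x) x := by
    intro x hx
    have hx1 : (1-x) ∈ Ioo (0:ℝ) 1 := ⟨by linarith [hx.2], by linarith [hx.1]⟩
    have h1 : HasDerivAt (fun x : ℝ => 1 - x) (-1) x := by
      simpa using (hasDerivAt_id x).const_sub (1:ℝ)
    have := (hd (1-x) hx1).comp x h1
    simpa [hu, hg, Function.comp_def] using this
  have hR : ∫ x in (1/2:ℝ)..1, (min x (1-x))^(2*m) * w x ^2 ≤ 2^(4*m+9) * J := by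
    have hreflL : ∫ x in (1/2:ℝ)..1, (min x (1-x))^(2*m) * w x ^2
        = ∫ x in (0:ℝ)..(1/2), x^(2*m) * u x ^2 := by
      have h1 := intervalIntegral.integral_comp_sub_left
        (a := (0:ℝ)) (b := 1/2) (fun y => (min y (1-y))^(2*m) * w y ^2) 1
      rw [show (1:ℝ)-(1/2) = 1/2 by norm_num, show (1:ℝ)-0 = 1 by norm_num] at h1
      rw [← h1]
      apply intervalIntegral.integral_congr
      intro x hx
      rw [uIcc_of_le (by norm_num : (0:ℝ) ≤ 1/2)] at hx
      have e : (1:ℝ)-(1-x) = x := by ring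
      simp only [hu, e]
      rw [min_eq_right (by linarith [hx.2])]
    have hreflR : ∫ x in (0:ℝ)..(1/2), x^(2*m+2) * (u x ^2 + g x ^2)
        = ∫ x in (1/2:ℝ)..1, (min x (1-x))^(2*m+2) * (w x ^2 + w' x ^2) := by
      have h1 := intervalIntegral.integral_comp_sub_left
        (a := (0:ℝ)) (b := 1/2) (fun y => (min y (1-y))^(2*m+2) * (w y ^2 + w' y ^2)) 1
      rw [show (1:ℝ)-(1/2) = 1/2 by norm_num, show (1:ℝ)-0 = 1 by norm_num] at h1
      rw [← h1]
      apply intervalIntegral.integral_congr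
      intro x hx
      rw [uIcc_of_le (by norm_num : (0:ℝ) ≤ 1/2)] at hx
      have e : (1:ℝ)-(1-x) = x := by ring
      simp only [hu, hg, e, neg_sq]
      rw [min_eq_right (by linarith [hx.2])]
    calc ∫ x in (1/2:ℝ)..1, (min x (1-x))^(2*m) * w x ^2
        = ∫ x in (0:ℝ)..(1/2), x^(2*m) * u x ^2 := hreflL
      _ ≤ 2^(4*m+9) * ∫ x in (0:ℝ)..(1/2), x^(2*m+2) * (u x ^2 + g x ^2) :=
          hardy_left m u g huc hgc hgd
      _ = 2^(4*m+9) * ∫ x in (1/2:ℝ)..1, (min x (1-x))^(2*m+2) * (w x ^2 + w' x ^2) := by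
          rw [hreflR]
      _ ≤ 2^(4*m+9) * J := by
          apply mul_le_mul_of_nonneg_left _ (by positivity)
          exact intervalIntegral.integral_mono_interval (by norm_num) (by norm_num) le_rfl
            (Filter.Eventually.of_forall hnnJ)
            (hintS _ _ _ (by norm_num) (Icc_subset_Icc le_rfl le_rfl))
  have hpow : (2:ℝ)^(4*m+10) = 2^(4*m+9) + 2^(4*m+9) := by rw [pow_succ]; ring
  rw [hsplit, hpow]
  have := add_le_add hL hR
  linarith [this]


set_option maxHeartbeats 1000000 in
/-- Lemma 3.1, inequality (3.5): with `ρ₀ x = min x (1-x)`, the higher-order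
degenerate-weighted energy functional
`E = ∫ ρ₀²(v² + vₓ²) + Σ_{k=2}^{6} ∫ ρ₀^k (∂ₓ^k v)²`
controls the unweighted `H³` norm of `v` on `(0,1)`. -/
theorem H3_controlled_by_weighted_energy :
    ∃ C : ℝ, 0 < C ∧
      ∀ v : ℝ → ℝ, ContDiffOn ℝ 6 v (Icc (0:ℝ) 1) →
        (∑ k ∈ Finset.range 4,
            ∫ x in (0:ℝ)..1, (iteratedDerivWithin k v (Icc (0:ℝ) 1) x) ^ 2) ≤
          C * ((∫ x in (0:ℝ)..1, (min x (1 - x)) ^ 2 *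
                  ((v x) ^ 2 + (iteratedDerivWithin 1 v (Icc (0:ℝ) 1) x) ^ 2)) +
               ∑ k ∈ Finset.Icc 2 6,
                 ∫ x in (0:ℝ)..1, (min x (1 - x)) ^ k *
                   (iteratedDerivWithin k v (Icc (0:ℝ) 1) x) ^ 2) := by
  refine ⟨(2:ℝ)^50, by positivity, ?_⟩
  intro v hv
  have udo : UniqueDiffOn ℝ (Icc (0:ℝ) 1) := uniqueDiffOn_Icc (by norm_num)
  have hcont : ∀ k : ℕ, k ≤ 6 →
      ContinuousOn (iteratedDerivWithin k v (Icc (0:ℝ) 1)) (Icc (0:ℝ) 1) := fun k hk =>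
    hv.continuousOn_iteratedDerivWithin (by exact_mod_cast hk) udo
  have hder : ∀ k : ℕ, k < 6 → ∀ x ∈ Ioo (0:ℝ) 1,
      HasDerivAt (iteratedDerivWithin k v (Icc (0:ℝ) 1))
        (iteratedDerivWithin (k+1) v (Icc (0:ℝ) 1) x) x := by
    intro k hk x hx
    have hmem : x ∈ Icc (0:ℝ) 1 := Ioo_subset_Icc_self hx
    have hdf : DifferentiableOn ℝ (iteratedDerivWithin k v (Icc (0:ℝ) 1)) (Icc (0:ℝ) 1) :=
      hv.differentiableOn_iteratedDerivWithin (by exact_mod_cast hk) udo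
    have h1 := (hdf x hmem).hasDerivWithinAt
    rw [show iteratedDerivWithin (k+1) v (Icc (0:ℝ) 1) x
        = derivWithin (iteratedDerivWithin k v (Icc (0:ℝ) 1)) (Icc (0:ℝ) 1) x
      from by rw [iteratedDerivWithin_succ]]
    exact h1.hasDerivAt (Icc_mem_nhds hx.1 hx.2)
  have hmin_c : Continuous (fun x : ℝ => min x (1-x)) :=
    continuous_id.min (continuous_const.sub continuous_id)
  set Iq : ℕ → ℕ → ℝ := fun j k =>
    ∫ x in (0:ℝ)..1, (min x (1-x))^j * (iteratedDerivWithin k v (Icc (0:ℝ) 1) x)^2 with hIq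
  have hint : ∀ j k : ℕ, k ≤ 6 → IntervalIntegrable
      (fun x => (min x (1-x))^j * (iteratedDerivWithin k v (Icc (0:ℝ) 1) x)^2)
      volume 0 1 := by
    intro j k hk
    apply ContinuousOn.intervalIntegrable
    rw [uIcc_of_le (by norm_num : (0:ℝ) ≤ 1)]
    exact ((hmin_c.pow j).continuousOn).mul ((hcont k hk).pow 2)
  have hnonneg : ∀ j k : ℕ, k ≤ 6 → 0 ≤ Iq j k := by
    intro j k hk
    apply intervalIntegral.integral_nonneg (by norm_num)
    intro x hx
    exact mul_nonneg (pow_nonneg (le_min hx.1 (by linarith [hx.2])) _) (sq_nonneg _)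
  have hmono : ∀ j j' k : ℕ, j ≤ j' → k ≤ 6 → Iq j' k ≤ Iq j k := by
    intro j j' k hj hk
    apply intervalIntegral.integral_mono_on (by norm_num) (hint j' k hk) (hint j k hk)
    intro x hx
    have h0 : 0 ≤ min x (1-x) := le_min hx.1 (by linarith [hx.2])
    have h1 : min x (1-x) ≤ 1 := le_trans (min_le_left _ _) hx.2
    exact mul_le_mul_of_nonneg_right (pow_le_pow_of_le_one h0 h1 hj) (sq_nonneg _)
  have key : ∀ m k : ℕ, k + 1 ≤ 6 →
      Iq (2*m) k ≤ 2^(4*m+10) * (Iq (2*m+2) k + Iq (2*m+2) (k+1)) := by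
    intro m k hk
    have h := hardy_full m _ _ (hcont k (by omega)) (hcont (k+1) hk) (hder k (by omega))
    have hsp : ∫ x in (0:ℝ)..1, (min x (1-x))^(2*m+2) *
          ((iteratedDerivWithin k v (Icc (0:ℝ) 1) x)^2
            + (iteratedDerivWithin (k+1) v (Icc (0:ℝ) 1) x)^2)
        = Iq (2*m+2) k + Iq (2*m+2) (k+1) := by
      rw [hIq, ← intervalIntegral.integral_add (hint (2*m+2) k (by omega)) (hint (2*m+2) (k+1) hk)]
      apply intervalIntegral.integral_congr
      intro x hx
      ring
    rw [hsp] at h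
    exact h
  -- expand goal sums
  have e0 : ∀ k : ℕ, (∫ x in (0:ℝ)..1, (iteratedDerivWithin k v (Icc (0:ℝ) 1) x)^2) = Iq 0 k := by
    intro k
    rw [hIq]
    apply intervalIntegral.integral_congr
    intro x hx
    simp
  rw [Finset.sum_range_succ, Finset.sum_range_succ, Finset.sum_range_succ,
    Finset.sum_range_one, e0 0, e0 1, e0 2, e0 3]
  have hs1 : (∫ x in (0:ℝ)..1, (min x (1 - x)) ^ 2 *
        ((v x) ^ 2 + (iteratedDerivWithin 1 v (Icc (0:ℝ) 1) x) ^ 2)) = Iq 2 0 + Iq 2 1 := by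
    rw [hIq, ← intervalIntegral.integral_add (hint 2 0 (by omega)) (hint 2 1 (by omega))]
    apply intervalIntegral.integral_congr
    intro x hx
    rw [iteratedDerivWithin_zero]
    ring
  have hs2 : (∑ k ∈ Finset.Icc 2 6,
        ∫ x in (0:ℝ)..1, (min x (1 - x)) ^ k *
          (iteratedDerivWithin k v (Icc (0:ℝ) 1) x) ^ 2)
      = Iq 2 2 + Iq 3 3 + Iq 4 4 + Iq 5 5 + Iq 6 6 := by
    rw [show Finset.Icc 2 6 = {2,3,4,5,6} from by decide]
    rw [Finset.sum_insert (by decide), Finset.sum_insert (by decide),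
      Finset.sum_insert (by decide), Finset.sum_insert (by decide), Finset.sum_singleton]
    simp only [hIq]
    ring
  rw [hs1, hs2]
  have k00 := key 0 0 (by omega)
  have k01 := key 0 1 (by omega)
  have k02 := key 0 2 (by omega)
  have k03 := key 0 3 (by omega)
  have k23 := key 1 3 (by omega)
  have k24 := key 1 4 (by omega)
  have k45 := key 2 5 (by omega)
  norm_num at k00 k01 k02 k03 k23 k24 k45
  have m43 : Iq 4 3 ≤ Iq 3 3 := hmono 3 4 3 (by omega) (by omega)
  have m65 : Iq 6 5 ≤ Iq 5 5 := hmono 5 6 5 (by omega) (by omega)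
  have n20 := hnonneg 2 0 (by omega)
  have n21 := hnonneg 2 1 (by omega)
  have n22 := hnonneg 2 2 (by omega)
  have n33 := hnonneg 3 3 (by omega)
  have n44 := hnonneg 4 4 (by omega)
  have n55 := hnonneg 5 5 (by omega)
  have n66 := hnonneg 6 6 (by omega)
  norm_num
  linarith
end

section
/- Let ρ₀(x) = min(x, 1-x) on I = (0,1). There is an absolute constant C such that for all w ∈ C¹([0,1]), ‖w‖²_{H^{1/2}(I)} ≤ C ∫₀¹ ρ₀(x)(w(x)² + w'(x)²) dx. -/
open Set MeasureTheory

namespace WHhalf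




/-- The diagonal in the plane is Lebesgue-null. -/
lemma diag_null :
    ((volume : Measure ℝ).prod (volume : Measure ℝ)) {p : ℝ × ℝ | p.1 = p.2} = 0 := by
  have hD : MeasurableSet {p : ℝ × ℝ | p.1 = p.2} :=
    measurableSet_eq_fun measurable_fst measurable_snd
  rw [Measure.prod_apply hD]
  have h : ∀ x : ℝ, (volume (Prod.mk x ⁻¹' {p : ℝ × ℝ | p.1 = p.2})) = 0 := by
    intro x
    have : (Prod.mk x ⁻¹' {p : ℝ × ℝ | p.1 = p.2}) = {x} := by
      ext y; simp [eq_comm]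
    rw [this]; exact measure_singleton x
  simp [h]

section W

variable {w w' : ℝ → ℝ}

/-- Integrability of the fractional integrand on a product rectangle. -/
lemma prod_integrable (hw : ContinuousOn w (Icc 0 1)) {M : ℝ}
    (hM : ∀ x ∈ Icc (0:ℝ) 1, ∀ y ∈ Icc (0:ℝ) 1, (w x - w y)^2 / |x - y|^2 ≤ M)
    {s t : Set ℝ} (hs : MeasurableSet s) (ht : MeasurableSet t)
    (hs1 : s ⊆ Icc 0 1) (ht1 : t ⊆ Icc 0 1) :
    Integrable (fun p : ℝ × ℝ => (w p.1 - w p.2)^2 / |p.1 - p.2|^2)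
      ((volume.restrict s).prod (volume.restrict t)) := by
  set D : Set (ℝ × ℝ) := {p : ℝ × ℝ | p.1 = p.2} with hDdef
  have hDm : MeasurableSet D := measurableSet_eq_fun measurable_fst measurable_snd
  have hQ : MeasurableSet ((s ×ˢ t) \ D) := (hs.prod ht).diff hDm
  have hsub : (s ×ˢ t : Set (ℝ × ℝ)) ⊆ Icc 0 1 ×ˢ Icc 0 1 := prod_mono hs1 ht1
  have hnull : (volume.prod volume) ((s ×ˢ t) ∩ D) = 0 :=
    measure_mono_null inter_subset_right diag_null
  have hae : ((s ×ˢ t) \ D : Set (ℝ × ℝ)) =ᵐ[volume.prod volume] (s ×ˢ t) :=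
    diff_ae_eq_self.mpr hnull
  rw [Measure.prod_restrict, ← Measure.restrict_congr_set hae]
  have hcont : ContinuousOn (fun p : ℝ × ℝ => (w p.1 - w p.2)^2 / |p.1 - p.2|^2)
      ((Icc 0 1 ×ˢ Icc 0 1) \ D) := by
    have h1 : ContinuousOn (fun p : ℝ × ℝ => w p.1) ((Icc 0 1 ×ˢ Icc 0 1) \ D) :=
      hw.comp continuous_fst.continuousOn (fun p hp => hp.1.1)
    have h2 : ContinuousOn (fun p : ℝ × ℝ => w p.2) ((Icc 0 1 ×ˢ Icc 0 1) \ D) :=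
      hw.comp continuous_snd.continuousOn (fun p hp => hp.1.2)
    refine ((h1.sub h2).pow 2).div (((continuous_fst.sub continuous_snd).abs.pow 2).continuousOn) ?_
    intro p hp
    have : p.1 - p.2 ≠ 0 := sub_ne_zero.mpr (by exact fun h => hp.2 h)
    positivity
  have hconst : Integrable (fun _ : ℝ × ℝ => M) (((volume.prod volume)).restrict ((s ×ˢ t) \ D)) := by
    rw [integrable_const_iff]
    refine Or.inr ?_
    rw [isFiniteMeasure_restrict, ← lt_top_iff_ne_top]
    calc (volume.prod volume) ((s ×ˢ t) \ D)
        ≤ (volume.prod volume) (Icc (0:ℝ) 1 ×ˢ Icc (0:ℝ) 1) :=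
          measure_mono (diff_subset.trans hsub)
      _ < ⊤ := by
          rw [Measure.prod_prod, Real.volume_Icc]
          exact ENNReal.mul_lt_top ENNReal.ofReal_lt_top ENNReal.ofReal_lt_top
  refine Integrable.mono' hconst
    ((hcont.mono (diff_subset_diff_left hsub)).aestronglyMeasurable hQ) ?_
  · filter_upwards [ae_restrict_mem hQ] with p hp
    have h0 : (0:ℝ) ≤ (w p.1 - w p.2)^2 / |p.1 - p.2|^2 := by positivity
    rw [Real.norm_eq_abs, abs_of_nonneg h0]
    exact hM p.1 (hs1 hp.1.1) p.2 (ht1 hp.1.2)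

/-- Integrability in one variable for fixed first argument. -/
lemma inner_integrable (hw : ContinuousOn w (Icc 0 1)) {M : ℝ}
    (hM : ∀ x ∈ Icc (0:ℝ) 1, ∀ y ∈ Icc (0:ℝ) 1, (w x - w y)^2 / |x - y|^2 ≤ M)
    {x : ℝ} (hx : x ∈ Icc (0:ℝ) 1) {t : Set ℝ} (ht : MeasurableSet t) (ht1 : t ⊆ Icc 0 1) :
    IntegrableOn (fun y => (w x - w y)^2 / |x - y|^2) t := by
  have hQ : MeasurableSet (t \ {x}) := ht.diff (measurableSet_singleton x)
  have hnull : volume (t ∩ {x}) = 0 :=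
    measure_mono_null inter_subset_right (measure_singleton x)
  have hae : (t \ {x} : Set ℝ) =ᵐ[volume] t := diff_ae_eq_self.mpr hnull
  rw [IntegrableOn, ← Measure.restrict_congr_set hae]
  have hcont : ContinuousOn (fun y => (w x - w y)^2 / |x - y|^2) (Icc 0 1 \ {x}) := by
    refine ((continuousOn_const.sub (hw.mono diff_subset)).pow 2).div
      (((continuous_const.sub continuous_id).abs.pow 2).continuousOn) ?_
    intro y hy
    have : x - y ≠ 0 := sub_ne_zero.mpr (fun h => hy.2 h.symm)
    positivity
  have hconst : Integrable (fun _ : ℝ => M) (volume.restrict (t \ {x})) := by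
    rw [integrable_const_iff]
    refine Or.inr ?_
    rw [isFiniteMeasure_restrict, ← lt_top_iff_ne_top]
    calc volume (t \ {x}) ≤ volume (Icc (0:ℝ) 1) :=
          measure_mono (diff_subset.trans ht1)
      _ < ⊤ := by rw [Real.volume_Icc]; exact ENNReal.ofReal_lt_top
  refine Integrable.mono' hconst
    ((hcont.mono (diff_subset_diff_left ht1)).aestronglyMeasurable hQ) ?_
  filter_upwards [ae_restrict_mem hQ] with y hy
  have h0 : (0:ℝ) ≤ (w x - w y)^2 / |x - y|^2 := by positivity
  rw [Real.norm_eq_abs, abs_of_nonneg h0]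
  exact hM x hx y (ht1 hy.1)

end W



lemma tri_package {b : ℝ} (hb : 0 < b) (F : ℝ → ℝ → ℝ) {M : ℝ}
    (hmeas : AEStronglyMeasurable (fun p : ℝ × ℝ => F p.1 p.2)
      ((volume.restrict (Ioc 0 b)).prod (volume.restrict (Ioc 0 b))))
    (hbd : ∀ x ∈ Ioc (0:ℝ) b, ∀ y ∈ Ioc (0:ℝ) b, |F x y| ≤ M) :
    ((∫ x in Ioc (0:ℝ) b, ∫ y in Ioc (0:ℝ) x, F x y) =
      ∫ y in Ioc (0:ℝ) b, ∫ x in Ioc y b, F x y) ∧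
    IntegrableOn (fun x => ∫ y in Ioc (0:ℝ) x, F x y) (Ioc (0:ℝ) b) ∧
    IntegrableOn (fun x => ∫ y in Ioc x b, F x y) (Ioc (0:ℝ) b) := by
  have hM0 : 0 ≤ M := le_trans (abs_nonneg _) (hbd b ⟨hb, le_refl b⟩ b ⟨hb, le_refl b⟩)
  set μ := volume.restrict (Ioc (0:ℝ) b) with hμ
  set S : Set (ℝ × ℝ) := {q : ℝ × ℝ | q.2 ≤ q.1} with hS
  have hSm : MeasurableSet S := measurableSet_le measurable_snd measurable_fst
  set S' : Set (ℝ × ℝ) := {q : ℝ × ℝ | q.1 < q.2} with hS'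
  have hS'm : MeasurableSet S' := measurableSet_lt measurable_fst measurable_snd
  have haeP : ∀ᵐ p ∂(μ.prod μ), p.1 ∈ Ioc (0:ℝ) b ∧ p.2 ∈ Ioc (0:ℝ) b := by
    rw [hμ, Measure.prod_restrict]
    filter_upwards [ae_restrict_mem (measurableSet_Ioc.prod measurableSet_Ioc)] with p hp
    exact ⟨hp.1, hp.2⟩
  have hconst : Integrable (fun _ : ℝ × ℝ => M) (μ.prod μ) := by
    rw [integrable_const_iff]
    refine Or.inr ?_
    rw [hμ, Measure.prod_restrict, isFiniteMeasure_restrict, ← lt_top_iff_ne_top, Measure.prod_prod,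
      Real.volume_Ioc]
    exact ENNReal.mul_lt_top ENNReal.ofReal_lt_top ENNReal.ofReal_lt_top
  have hint : ∀ T : Set (ℝ × ℝ), MeasurableSet T →
      Integrable (T.indicator (fun q : ℝ × ℝ => F q.1 q.2)) (μ.prod μ) := by
    intro T hT
    refine Integrable.mono' hconst (hmeas.indicator hT) ?_
    filter_upwards [haeP] with p hp
    rw [Real.norm_eq_abs]
    by_cases h : p ∈ T
    · rw [Set.indicator_of_mem h]; exact hbd _ hp.1 _ hp.2
    · rw [Set.indicator_of_notMem h, abs_zero]; exact hM0
  set G1 : ℝ × ℝ → ℝ := S.indicator (fun q => F q.1 q.2) with hG1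
  set G2 : ℝ × ℝ → ℝ := S'.indicator (fun q => F q.1 q.2) with hG2
  have hIG1 : Integrable G1 (μ.prod μ) := hint S hSm
  have hIG2 : Integrable G2 (μ.prod μ) := hint S' hS'm
  -- inner rewrites
  have key1 : ∀ x ∈ Ioc (0:ℝ) b, (∫ y, G1 (x, y) ∂μ) = ∫ y in Ioc (0:ℝ) x, F x y := by
    intro x hx
    have h1 : (fun y => G1 (x, y)) = (Iic x).indicator (fun y => F x y) := by
      rw [hG1]; ext y
      by_cases h : y ≤ x
      · rw [Set.indicator_of_mem (show ((x,y) : ℝ × ℝ) ∈ S from h),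
          Set.indicator_of_mem (Set.mem_Iic.mpr h)]
      · rw [Set.indicator_of_notMem (show ((x,y) : ℝ × ℝ) ∉ S from h),
          Set.indicator_of_notMem (fun hy => h (Set.mem_Iic.mp hy))]
    rw [h1, hμ, setIntegral_indicator measurableSet_Iic, Ioc_inter_Iic]
    congr 1
    rw [min_eq_right hx.2]
  have key2 : ∀ x ∈ Ioc (0:ℝ) b, (∫ y, G2 (x, y) ∂μ) = ∫ y in Ioc x b, F x y := by
    intro x hx
    have h1 : (fun y => G2 (x, y)) = (Ioi x).indicator (fun y => F x y) := by
      rw [hG2]; ext y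
      by_cases h : x < y
      · rw [Set.indicator_of_mem (show ((x,y) : ℝ × ℝ) ∈ S' from h),
          Set.indicator_of_mem (Set.mem_Ioi.mpr h)]
      · rw [Set.indicator_of_notMem (show ((x,y) : ℝ × ℝ) ∉ S' from h),
          Set.indicator_of_notMem (fun hy => h (Set.mem_Ioi.mp hy))]
    have hset : Ioc (0:ℝ) b ∩ Ioi x = Ioc x b := by
      ext z
      simp only [mem_inter_iff, mem_Ioc, mem_Ioi]
      constructor
      · rintro ⟨⟨h1', h2⟩, h3⟩; exact ⟨h3, h2⟩
      · rintro ⟨h1', h2⟩; exact ⟨⟨lt_trans hx.1 h1', h2⟩, h1'⟩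
    rw [h1, hμ, setIntegral_indicator measurableSet_Ioi, hset]
  have key3 : ∀ y ∈ Ioc (0:ℝ) b, (∫ x, G1 (x, y) ∂μ) = ∫ x in Ioc y b, F x y := by
    intro y hy
    have h1 : (fun x => G1 (x, y)) = (Ici y).indicator (fun x => F x y) := by
      rw [hG1]; ext x
      by_cases h : y ≤ x
      · rw [Set.indicator_of_mem (show ((x,y) : ℝ × ℝ) ∈ S from h),
          Set.indicator_of_mem (Set.mem_Ici.mpr h)]
      · rw [Set.indicator_of_notMem (show ((x,y) : ℝ × ℝ) ∉ S from h),
          Set.indicator_of_notMem (fun hy => h (Set.mem_Ici.mp hy))]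
    have h2 : Ioc (0:ℝ) b ∩ Ici y = Icc y b := by
      ext z
      simp only [mem_inter_iff, mem_Ioc, mem_Ici, mem_Icc]
      constructor
      · rintro ⟨⟨h1', h2'⟩, h3⟩; exact ⟨h3, h2'⟩
      · rintro ⟨h1', h2'⟩; exact ⟨⟨lt_of_lt_of_le hy.1 h1', h2'⟩, h1'⟩
    rw [h1, hμ, setIntegral_indicator measurableSet_Ici, h2, integral_Icc_eq_integral_Ioc]
  have huncurry : Function.uncurry (fun x y => G1 (x, y)) = G1 := by
    ext p; cases p; rfl
  have swap1 : (∫ x, ∫ y, G1 (x, y) ∂μ ∂μ) = ∫ y, ∫ x, G1 (x, y) ∂μ ∂μ := by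
    refine integral_integral_swap ?_
    rw [huncurry]; exact hIG1
  refine ⟨?_, ?_, ?_⟩
  · calc (∫ x in Ioc (0:ℝ) b, ∫ y in Ioc (0:ℝ) x, F x y)
        = ∫ x, ∫ y, G1 (x, y) ∂μ ∂μ := by
          rw [hμ]
          exact (setIntegral_congr_fun measurableSet_Ioc (fun x hx => (key1 x hx))).symm
      _ = ∫ y, ∫ x, G1 (x, y) ∂μ ∂μ := swap1
      _ = ∫ y in Ioc (0:ℝ) b, ∫ x in Ioc y b, F x y := by
          rw [hμ]
          exact setIntegral_congr_fun measurableSet_Ioc (fun y hy => (key3 y hy))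
  · have i1 : Integrable (fun x => ∫ y, G1 (x, y) ∂μ) μ := hIG1.integral_prod_left
    refine Integrable.congr i1 ?_
    rw [hμ]
    filter_upwards [ae_restrict_mem measurableSet_Ioc] with x hx
    exact key1 x hx
  · have i2 : Integrable (fun x => ∫ y, G2 (x, y) ∂μ) μ := hIG2.integral_prod_left
    refine Integrable.congr i2 ?_
    rw [hμ]
    filter_upwards [ae_restrict_mem measurableSet_Ioc] with x hx
    exact key2 x hx


section Hardy

variable {w w' : ℝ → ℝ}

/-- Hardy's inequality anchored at the left endpoint. -/
lemma hardy (hder : ∀ x ∈ Icc (0:ℝ) 1, HasDerivWithinAt w (w' x) (Icc (0:ℝ) 1) x)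
    (hw' : ContinuousOn w' (Icc 0 1)) {M : ℝ}
    (hlip : ∀ x ∈ Icc (0:ℝ) 1, ∀ y ∈ Icc (0:ℝ) 1, |w x - w y| ≤ M * |x - y|)
    (hMf : ∀ x ∈ Icc (0:ℝ) 1, ∀ y ∈ Icc (0:ℝ) 1, (w x - w y)^2 / |x - y|^2 ≤ M^2)
    {a b : ℝ} (ha : 0 ≤ a) (hab : a < b) (hb1 : b ≤ 1) :
    (∫ y in Ioc a b, (w a - w y)^2 / |a - y|^2) ≤ 4 * ∫ y in Ioc a b, (w' y)^2 := by
  have hw : ContinuousOn w (Icc 0 1) := fun x hx => (hder x hx).continuousWithinAt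
  have ha1 : a ∈ Icc (0:ℝ) 1 := ⟨ha, le_trans hab.le hb1⟩
  have hIccsub : Icc a b ⊆ Icc (0:ℝ) 1 := Icc_subset_Icc ha hb1
  have hJint : IntegrableOn (fun y => (w' y)^2) (Ioc a b) :=
    (((hw'.mono hIccsub).pow 2).integrableOn_Icc).mono_set Ioc_subset_Icc_self
  have hfint : IntegrableOn (fun y => (w a - w y)^2 / |a - y|^2) (Ioc a b) :=
    inner_integrable hw hMf ha1 measurableSet_Ioc (Ioc_subset_Icc_self.trans hIccsub)
  refine le_of_forall_pos_le_add ?_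
  intro c hc
  have hε0 : 0 < min ((b - a)/2) (c/(3*M^2+1)) :=
    lt_min (by linarith) (by positivity)
  set ε := min ((b - a)/2) (c/(3*M^2+1)) with hε
  have hεb : ε ≤ (b - a)/2 := min_le_left _ _
  have hεc : ε ≤ c/(3*M^2+1) := min_le_right _ _
  set a' := a + ε with ha'
  have hεba : a' < b := by simp only [ha']; linarith
  have hle : a' ≤ b := hεba.le
  have haa' : a < a' := by simp only [ha']; linarith
  have ha'0 : 0 ≤ a' := by simp only [ha']; linarith
  have hIccsub' : Icc a' b ⊆ Icc (0:ℝ) 1 := Icc_subset_Icc ha'0 hb1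
  have hya : ∀ y ∈ Icc a' b, 0 < y - a := fun y hy => by
    have h1 := hy.1; simp only [ha'] at h1; linarith
  -- continuity pieces on [a', b]
  have hwc : ContinuousOn w (Icc a' b) := hw.mono hIccsub'
  have hw'c : ContinuousOn w' (Icc a' b) := hw'.mono hIccsub'
  have hinvc : ContinuousOn (fun y : ℝ => (y - a)⁻¹) (Icc a' b) := by
    refine ContinuousOn.inv₀ (continuous_id.sub continuous_const).continuousOn
      (fun y hy => ne_of_gt (hya y hy))
  -- integration by parts via FTC-2
  set G : ℝ → ℝ := fun y => (w y - w a)^2 * (-(y - a)⁻¹) with hG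
  set Gd : ℝ → ℝ := fun y =>
    2*(w y - w a)*w' y * (-(y - a)⁻¹) + (w y - w a)^2 * ((y - a)⁻¹)^2 with hGd
  have hcontG : ContinuousOn G (Icc a' b) :=
    ((hwc.sub continuousOn_const).pow 2).mul hinvc.neg
  have hcontT1 : ContinuousOn (fun y => 2*(w y - w a)*w' y * (-(y - a)⁻¹)) (Icc a' b) :=
    ((continuousOn_const.mul (hwc.sub continuousOn_const)).mul hw'c).mul hinvc.neg
  have hcontT2 : ContinuousOn (fun y => (w y - w a)^2 * ((y - a)⁻¹)^2) (Icc a' b) :=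
    ((hwc.sub continuousOn_const).pow 2).mul (hinvc.pow 2)
  have hcontGd : ContinuousOn Gd (Icc a' b) := hcontT1.add hcontT2
  have hderivG : ∀ y ∈ Ioo a' b, HasDerivAt G (Gd y) y := by
    intro y hy
    have hy0 : 0 < y := lt_of_le_of_lt ha'0 hy.1
    have hy1 : y < 1 := lt_of_lt_of_le hy.2 hb1
    have hyIcc : y ∈ Icc (0:ℝ) 1 := ⟨hy0.le, hy1.le⟩
    have hdw : HasDerivAt w (w' y) y :=
      (hder y hyIcc).hasDerivAt (Icc_mem_nhds hy0 hy1)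
    have hne : y - a ≠ 0 := ne_of_gt (hya y (Ioo_subset_Icc_self hy))
    have h1 : HasDerivAt (fun z => (w z - w a)^2) (2*(w y - w a)*w' y) y := by
      have h := (hdw.sub_const (w a)).pow 2
      have he : ((2:ℕ):ℝ) * (w y - w a)^(2-1) * (w' y) = 2*(w y - w a)*w' y := by
        norm_num
      rwa [he] at h
    have hid : HasDerivAt (fun z : ℝ => z - a) 1 y := (hasDerivAt_id y).sub_const a
    have h2 : HasDerivAt (fun z : ℝ => -(z - a)⁻¹) (((y - a)⁻¹)^2) y := by
      have h := (hid.inv hne).neg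
      rw [show -(-1 / (y - a) ^ 2) = ((y - a)⁻¹)^2 by rw [neg_div, neg_neg, one_div, ← inv_pow]] at h
      exact h
    exact h1.mul h2
  have hintGd : IntervalIntegrable Gd volume a' b := hcontGd.intervalIntegrable_of_Icc hle
  have hftc : ∫ y in a'..b, Gd y = G b - G a' :=
    intervalIntegral.integral_eq_sub_of_hasDerivAt_of_le hle hcontG hderivG hintGd
  have hadd : ∫ y in a'..b, Gd y =
      (∫ y in a'..b, 2*(w y - w a)*w' y * (-(y - a)⁻¹)) +
      ∫ y in a'..b, (w y - w a)^2 * ((y - a)⁻¹)^2 := by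
    rw [← intervalIntegral.integral_add (hcontT1.intervalIntegrable_of_Icc hle)
      (hcontT2.intervalIntegrable_of_Icc hle)]
  set S := ∫ y in a'..b, (w y - w a)^2 * ((y - a)⁻¹)^2 with hSdef
  -- boundary terms
  have hGb : G b ≤ 0 := by
    simp only [hG]
    have h1 : (0:ℝ) < (b - a)⁻¹ := by
      have : (0:ℝ) < b - a := by linarith
      positivity
    nlinarith [sq_nonneg (w b - w a)]
  have hGa' : -G a' ≤ M^2 * ε := by
    simp only [hG, ha']
    have h1 : |w (a + ε) - w a| ≤ M * ε := by
      have := hlip (a + ε) (hIccsub' ⟨le_refl a', hle⟩) a ha1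
      simpa [abs_of_pos hε0] using this
    have h2 : (w (a + ε) - w a)^2 ≤ (M*ε)^2 := by
      have := sq_abs (w (a + ε) - w a)
      nlinarith [abs_nonneg (w (a + ε) - w a)]
    have h3 : (a + ε - a) = ε := by ring
    rw [h3]
    have hεne : ε ≠ 0 := ne_of_gt hε0
    have : -((w (a + ε) - w a)^2 * (-ε⁻¹)) = (w (a + ε) - w a)^2 * ε⁻¹ := by ring
    rw [this]
    calc (w (a + ε) - w a)^2 * ε⁻¹ ≤ (M*ε)^2 * ε⁻¹ := by
          apply mul_le_mul_of_nonneg_right h2 (by positivity)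
      _ = M^2 * ε := by field_simp
  -- AM-GM bound for the cross term
  have hcross : -(∫ y in a'..b, 2*(w y - w a)*w' y * (-(y - a)⁻¹)) ≤
      (1/2) * S + 2 * ∫ y in a'..b, (w' y)^2 := by
    rw [← intervalIntegral.integral_neg]
    have hmono : ∫ y in a'..b, -(2*(w y - w a)*w' y * (-(y - a)⁻¹)) ≤
        ∫ y in a'..b, ((1/2) * ((w y - w a)^2 * ((y - a)⁻¹)^2) + 2 * (w' y)^2) := by
      refine intervalIntegral.integral_mono_on hle
        (hcontT1.neg.intervalIntegrable_of_Icc hle)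
        (((continuousOn_const.mul hcontT2).add
          (continuousOn_const.mul (hw'c.pow 2))).intervalIntegrable_of_Icc hle) ?_
      intro y hy
      have hr : 0 < (y - a)⁻¹ := inv_pos.mpr (hya y hy)
      nlinarith [sq_nonneg ((w y - w a) * (y - a)⁻¹ - 2 * (w' y))]
    calc _ ≤ _ := hmono
      _ = (1/2) * S + 2 * ∫ y in a'..b, (w' y)^2 := by
        rw [intervalIntegral.integral_add (f := fun y => (1/2) * ((w y - w a)^2 * ((y - a)⁻¹)^2))
            (g := fun y => 2 * (w' y)^2)
            ((continuousOn_const.mul hcontT2).intervalIntegrable_of_Icc hle)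
            ((continuousOn_const.mul (hw'c.pow 2)).intervalIntegrable_of_Icc hle),
          intervalIntegral.integral_const_mul, intervalIntegral.integral_const_mul]
  -- combine: S ≤ 2 M² ε + 4 ∫ w'²
  have hS : S ≤ 2 * M^2 * ε + 4 * ∫ y in a'..b, (w' y)^2 := by
    have h0 : S = (G b - G a') - ∫ y in a'..b, 2*(w y - w a)*w' y * (-(y - a)⁻¹) := by
      rw [← hftc, hadd]; ring
    have := hGb; have := hGa'; have := hcross
    linarith
  -- w'² tail comparison
  have hw2 : ∫ y in a'..b, (w' y)^2 ≤ ∫ y in Ioc a b, (w' y)^2 := by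
    rw [intervalIntegral.integral_of_le hle]
    refine setIntegral_mono_set hJint (ae_of_all _ (fun y => sq_nonneg _)) ?_
    exact HasSubset.Subset.eventuallyLE (Ioc_subset_Ioc_left haa'.le)
  -- identify S with the set integral of f over (a', b]
  have hS_eq : ∫ y in Ioc a' b, (w a - w y)^2 / |a - y|^2 = S := by
    rw [← intervalIntegral.integral_of_le hle]
    refine intervalIntegral.integral_congr ?_
    intro y hy
    rw [uIcc_of_le hle] at hy
    have hyane : y - a ≠ 0 := ne_of_gt (hya y hy)
    show (w a - w y)^2 / |a - y|^2 = (w y - w a)^2 * ((y - a)⁻¹)^2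
    have habs : |a - y|^2 = (y - a)^2 := by
      rw [sq_abs]; ring
    rw [habs, div_eq_mul_inv, ← inv_pow]
    ring
  -- small piece near a
  have hp1 : ∫ y in Ioc a a', (w a - w y)^2 / |a - y|^2 ≤ M^2 * ε := by
    have hsub : Ioc a a' ⊆ Icc (0:ℝ) 1 :=
      (Ioc_subset_Icc_self).trans (Icc_subset_Icc ha (by linarith))
    calc ∫ y in Ioc a a', (w a - w y)^2 / |a - y|^2 ≤ ∫ _y in Ioc a a', M^2 := by
          refine setIntegral_mono_on (hfint.mono_set (Ioc_subset_Ioc_right hle))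
            ((integrableOn_const_iff).mpr (Or.inr (by rw [Real.volume_Ioc]; exact ENNReal.ofReal_lt_top)))
            measurableSet_Ioc ?_
          exact fun y hy => hMf a ha1 y (hsub hy)
      _ = M^2 * ε := by
          rw [setIntegral_const, measureReal_def, Real.volume_Ioc, smul_eq_mul]
          rw [ENNReal.toReal_ofReal (by linarith : (0:ℝ) ≤ a' - a)]
          simp only [ha']; ring
  -- split and finish
  have hsplit : ∫ y in Ioc a b, (w a - w y)^2 / |a - y|^2 =
      (∫ y in Ioc a a', (w a - w y)^2 / |a - y|^2) +
      ∫ y in Ioc a' b, (w a - w y)^2 / |a - y|^2 := by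
    rw [← setIntegral_union (Ioc_disjoint_Ioc_of_le le_rfl) measurableSet_Ioc
      (hfint.mono_set (Ioc_subset_Ioc_right hle))
      (hfint.mono_set (Ioc_subset_Ioc_left haa'.le)),
      Ioc_union_Ioc_eq_Ioc haa'.le hle]
  have h3Mc : 3 * M^2 * ε ≤ c := by
    have hpos : (0:ℝ) < 3*M^2+1 := by positivity
    have h2 : (3*M^2) * ε ≤ (3*M^2) * (c/(3*M^2+1)) :=
      mul_le_mul_of_nonneg_left hεc (by positivity)
    have h3 : (3*M^2) * (c/(3*M^2+1)) ≤ c := by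
      rw [mul_div_assoc', div_le_iff₀ hpos]
      nlinarith [sq_nonneg M, hc.le]
    linarith
  rw [hsplit, hS_eq]
  linarith

/-- basic facts about the Lipschitz bound -/
lemma lip_facts (hder : ∀ x ∈ Icc (0:ℝ) 1, HasDerivWithinAt w (w' x) (Icc (0:ℝ) 1) x)
    (hw' : ContinuousOn w' (Icc 0 1)) :
    ∃ M : ℝ, 0 ≤ M ∧ (∀ x ∈ Icc (0:ℝ) 1, |w' x| ≤ M) ∧
      (∀ x ∈ Icc (0:ℝ) 1, ∀ y ∈ Icc (0:ℝ) 1, |w x - w y| ≤ M * |x - y|) ∧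
      (∀ x ∈ Icc (0:ℝ) 1, ∀ y ∈ Icc (0:ℝ) 1, (w x - w y)^2 / |x - y|^2 ≤ M^2) := by
  obtain ⟨C, hC⟩ := isCompact_Icc.exists_bound_of_continuousOn hw'
  set M : ℝ := max C 0 with hMdef
  have hMbd : ∀ z ∈ Icc (0:ℝ) 1, ‖w' z‖ ≤ M := fun z hz =>
    le_trans (hC z hz) (le_max_left _ _)
  have hlip : ∀ x ∈ Icc (0:ℝ) 1, ∀ y ∈ Icc (0:ℝ) 1, |w x - w y| ≤ M * |x - y| := by
    intro x hx y hy
    have h := Convex.norm_image_sub_le_of_norm_hasDerivWithin_le hder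
      hMbd (convex_Icc 0 1) hy hx
    simpa [Real.norm_eq_abs] using h
  refine ⟨M, le_max_right _ _, ?_, hlip, ?_⟩
  · intro x hx
    exact hMbd x hx
  · intro x hx y hy
    rcases eq_or_ne x y with rfl | hne
    · have h0 : (w x - w x)^2 / |x - x|^2 = 0 := by simp
      rw [h0]
      positivity
    · have habs : 0 < |x - y| := abs_pos.mpr (sub_ne_zero.mpr hne)
      rw [div_le_iff₀ (by positivity)]
      have h := hlip x hx y hy
      calc (w x - w y)^2 = |w x - w y|^2 := (sq_abs _).symm
        _ ≤ (M * |x - y|)^2 := by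
            apply pow_le_pow_left₀ (abs_nonneg _) h
        _ = M^2 * |x - y|^2 := by ring

/-- Main estimate on a left interval `(0,b)`. -/
lemma main_left (hder : ∀ x ∈ Icc (0:ℝ) 1, HasDerivWithinAt w (w' x) (Icc (0:ℝ) 1) x)
    (hw' : ContinuousOn w' (Icc 0 1)) {b : ℝ} (hb0 : 0 < b) (hb1 : b ≤ 1) :
    (∫ x in Ioc (0:ℝ) b, ∫ y in Ioc (0:ℝ) b, (w x - w y)^2 / |x - y|^2) ≤
      8 * ∫ x in Ioc (0:ℝ) b, x * (w' x)^2 := by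
  have hw : ContinuousOn w (Icc 0 1) := fun x hx => (hder x hx).continuousWithinAt
  obtain ⟨M, hM0, hMd, hlip, hMf⟩ := lip_facts hder hw'
  have hsub : Ioc (0:ℝ) b ⊆ Icc (0:ℝ) 1 :=
    Ioc_subset_Icc_self.trans (Icc_subset_Icc le_rfl hb1)
  have hfnonneg : ∀ x y : ℝ, 0 ≤ (w x - w y)^2 / |x - y|^2 := fun x y => by positivity
  -- measurability inputs for tri_package
  have hmeasf : AEStronglyMeasurable
      (fun p : ℝ × ℝ => (w p.1 - w p.2)^2 / |p.1 - p.2|^2)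
      ((volume.restrict (Ioc 0 b)).prod (volume.restrict (Ioc 0 b))) :=
    (prod_integrable hw hMf measurableSet_Ioc measurableSet_Ioc hsub hsub).aestronglyMeasurable
  have hmeas_fst : AEStronglyMeasurable (fun p : ℝ × ℝ => (w' p.1)^2)
      ((volume.restrict (Ioc 0 b)).prod (volume.restrict (Ioc 0 b))) := by
    rw [Measure.prod_restrict]
    refine ContinuousOn.aestronglyMeasurable ?_ (measurableSet_Ioc.prod measurableSet_Ioc)
    exact (hw'.comp continuous_fst.continuousOn
      (fun p (hp : p ∈ Ioc (0:ℝ) b ×ˢ Ioc (0:ℝ) b) => hsub hp.1)).pow 2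
  have hmeas_snd : AEStronglyMeasurable (fun p : ℝ × ℝ => (w' p.2)^2)
      ((volume.restrict (Ioc 0 b)).prod (volume.restrict (Ioc 0 b))) := by
    rw [Measure.prod_restrict]
    refine ContinuousOn.aestronglyMeasurable ?_ (measurableSet_Ioc.prod measurableSet_Ioc)
    exact (hw'.comp continuous_snd.continuousOn
      (fun p (hp : p ∈ Ioc (0:ℝ) b ×ˢ Ioc (0:ℝ) b) => hsub hp.2)).pow 2
  -- bounds for tri_package
  have hbdf : ∀ x ∈ Ioc (0:ℝ) b, ∀ y ∈ Ioc (0:ℝ) b,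
      |(w x - w y)^2 / |x - y|^2| ≤ M^2 := by
    intro x hx y hy
    rw [abs_of_nonneg (hfnonneg x y)]
    exact hMf x (hsub hx) y (hsub hy)
  have hbd' : ∀ z ∈ Icc (0:ℝ) 1, |(w' z)^2| ≤ M^2 := by
    intro z hz
    rw [abs_of_nonneg (sq_nonneg _), ← sq_abs]
    exact pow_le_pow_left₀ (abs_nonneg _) (hMd z hz) 2
  have tri_f := tri_package hb0 (fun x y => (w x - w y)^2 / |x - y|^2) hmeasf hbdf
  have tri_fst := tri_package hb0 (fun x _ => (w' x)^2) hmeas_fst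
    (fun x hx _ _ => hbd' x (hsub hx))
  have tri_snd := tri_package hb0 (fun _ y => (w' y)^2) hmeas_snd
    (fun _ _ y hy => hbd' y (hsub hy))
  -- split the inner integral
  have hinner_split : ∀ x ∈ Ioc (0:ℝ) b,
      (∫ y in Ioc (0:ℝ) b, (w x - w y)^2 / |x - y|^2) =
        (∫ y in Ioc (0:ℝ) x, (w x - w y)^2 / |x - y|^2) +
        ∫ y in Ioc x b, (w x - w y)^2 / |x - y|^2 := by
    intro x hx
    rw [← Ioc_union_Ioc_eq_Ioc hx.1.le hx.2,
      setIntegral_union (Ioc_disjoint_Ioc_of_le le_rfl) measurableSet_Ioc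
        ((inner_integrable hw hMf (hsub hx) measurableSet_Ioc
          (Ioc_subset_Icc_self.trans (Icc_subset_Icc le_rfl (le_trans hx.2 hb1)))))
        ((inner_integrable hw hMf (hsub hx) measurableSet_Ioc
          ((Ioc_subset_Ioc_left hx.1.le).trans hsub)))]
  have hsplit : (∫ x in Ioc (0:ℝ) b, ∫ y in Ioc (0:ℝ) b, (w x - w y)^2 / |x - y|^2) =
      (∫ x in Ioc (0:ℝ) b, ∫ y in Ioc (0:ℝ) x, (w x - w y)^2 / |x - y|^2) +
      ∫ x in Ioc (0:ℝ) b, ∫ y in Ioc x b, (w x - w y)^2 / |x - y|^2 := by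
    rw [← integral_add tri_f.2.1 tri_f.2.2]
    exact setIntegral_congr_fun measurableSet_Ioc (fun x hx => hinner_split x hx)
  -- Hardy bound for T2
  have hhardy_pt : ∀ x ∈ Ioc (0:ℝ) b,
      (∫ y in Ioc x b, (w x - w y)^2 / |x - y|^2) ≤ 4 * ∫ y in Ioc x b, (w' y)^2 := by
    intro x hx
    rcases eq_or_lt_of_le hx.2 with rfl | hlt
    · simp [Ioc_self]
    · exact hardy hder hw' hlip hMf hx.1.le hlt hb1
  have hT2 : (∫ x in Ioc (0:ℝ) b, ∫ y in Ioc x b, (w x - w y)^2 / |x - y|^2) ≤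
      4 * ∫ x in Ioc (0:ℝ) b, ∫ y in Ioc x b, (w' y)^2 := by
    rw [← integral_const_mul]
    exact setIntegral_mono_on tri_f.2.2 (tri_snd.2.2.const_mul 4) measurableSet_Ioc
      (fun x hx => hhardy_pt x hx)
  -- T1 via swap and symmetry
  have hsym : ∀ x y : ℝ, (w x - w y)^2 / |x - y|^2 = (w y - w x)^2 / |y - x|^2 := by
    intro x y
    rw [abs_sub_comm]
    congr 1
    ring
  have hT1swap : (∫ x in Ioc (0:ℝ) b, ∫ y in Ioc (0:ℝ) x, (w x - w y)^2 / |x - y|^2) =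
      ∫ y in Ioc (0:ℝ) b, ∫ x in Ioc y b, (w y - w x)^2 / |y - x|^2 := by
    rw [tri_f.1]
    refine setIntegral_congr_fun measurableSet_Ioc (fun y _ => ?_)
    refine integral_congr_ae (ae_of_all _ (fun x => ?_))
    exact hsym x y
  have hT1 : (∫ y in Ioc (0:ℝ) b, ∫ x in Ioc y b, (w y - w x)^2 / |y - x|^2) ≤
      4 * ∫ y in Ioc (0:ℝ) b, ∫ x in Ioc y b, (w' x)^2 := by
    rw [← integral_const_mul]
    refine setIntegral_mono_on tri_f.2.2 (tri_snd.2.2.const_mul 4) measurableSet_Ioc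
      (fun y hy => ?_)
    rcases eq_or_lt_of_le hy.2 with rfl | hlt
    · simp [Ioc_self]
    · exact hardy hder hw' hlip hMf hy.1.le hlt hb1
  -- weight identity
  have hweight : (∫ x in Ioc (0:ℝ) b, x * (w' x)^2) =
      ∫ y in Ioc (0:ℝ) b, ∫ x in Ioc y b, (w' x)^2 := by
    rw [← tri_fst.1]
    refine (setIntegral_congr_fun measurableSet_Ioc (fun x hx => ?_)).symm
    rw [setIntegral_const, measureReal_def, Real.volume_Ioc, sub_zero, smul_eq_mul,
      ENNReal.toReal_ofReal hx.1.le]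
  rw [hsplit, hT1swap]
  rw [hweight]
  linarith [hT1, hT2]

end Hardy


lemma reflect_eq (g : ℝ → ℝ) {δ : ℝ} (hδ : 0 ≤ δ) (hδ1 : δ ≤ 1) :
    ∫ s in Ioc (0:ℝ) (1-δ), g (1 - s) = ∫ x in Ioc δ 1, g x := by
  rw [← intervalIntegral.integral_of_le (by linarith : (0:ℝ) ≤ 1 - δ),
    ← intervalIntegral.integral_of_le (by linarith : δ ≤ (1:ℝ)),
    intervalIntegral.integral_comp_sub_left g 1]
  congr 1 <;> ring


end WHhalf

open WHhalf

set_option maxHeartbeats 2000000 in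
/-- Weighted Sobolev embedding (3.1) of the paper: with `ρ₀ x = min x (1-x)`,
`‖w‖²_{H^{1/2}(0,1)} ≤ C ∫₀¹ ρ₀ (w² + w'²)`, where the `H^{1/2}` norm is
`‖w‖²_{L²} + ∫∫ |w(x)-w(y)|²/|x-y|²`. -/
theorem weighted_Hhalf_embedding :
    ∃ C : ℝ, 0 < C ∧
      ∀ w w' : ℝ → ℝ,
        (∀ x ∈ Icc (0:ℝ) 1, HasDerivWithinAt w (w' x) (Icc (0:ℝ) 1) x) →
        ContinuousOn w' (Icc (0:ℝ) 1) →
        (∫ x in (0:ℝ)..1, (w x) ^ 2) +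
          (∫ x in (0:ℝ)..1, ∫ y in (0:ℝ)..1, (w x - w y) ^ 2 / |x - y| ^ 2) ≤
        C * ∫ x in (0:ℝ)..1, min x (1 - x) * ((w x) ^ 2 + (w' x) ^ 2) := by
  refine ⟨16000, by norm_num, ?_⟩
  intro w w' hder hw'
  have hw : ContinuousOn w (Icc 0 1) := fun x hx => (hder x hx).continuousWithinAt
  obtain ⟨M, hM0, hMd, hlip, hMf⟩ := lip_facts hder hw'
  have hfnonneg : ∀ x y : ℝ, 0 ≤ (w x - w y)^2 / |x - y|^2 := fun x y => by positivity
  set δ : ℝ := 1/100 with hδdef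
  set b : ℝ := 99/100 with hbdef
  have hδ0 : (0:ℝ) < δ := by norm_num
  have hb1 : b ≤ (1:ℝ) := by norm_num
  have hb0 : (0:ℝ) < b := by norm_num
  -- subsets
  have hsub01 : Ioc (0:ℝ) 1 ⊆ Icc (0:ℝ) 1 := Ioc_subset_Icc_self
  have hsubIoc : ∀ {u v : ℝ}, 0 ≤ u → v ≤ 1 → Ioc u v ⊆ Icc (0:ℝ) 1 := by
    intro u v hu hv
    exact (Ioc_subset_Icc_self).trans (Icc_subset_Icc hu hv)
  -- basic integrabilities
  have hAint : IntegrableOn (fun x => (w x)^2) (Ioc 0 1) :=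
    ((hw.pow 2).integrableOn_Icc).mono_set Ioc_subset_Icc_self
  have hRint : IntegrableOn (fun x => min x (1-x) * ((w x)^2 + (w' x)^2)) (Ioc 0 1) := by
    refine (ContinuousOn.integrableOn_Icc ?_).mono_set Ioc_subset_Icc_self
    exact ((continuous_min.comp (continuous_id.prodMk (continuous_const.sub continuous_id))).continuousOn).mul
      ((hw.pow 2).add (hw'.pow 2))
  set A := ∫ x in Ioc (0:ℝ) 1, (w x)^2 with hAdef
  set R := ∫ x in Ioc (0:ℝ) 1, min x (1-x) * ((w x)^2 + (w' x)^2) with hRdef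
  have hR0 : 0 ≤ R := by
    refine setIntegral_nonneg measurableSet_Ioc (fun x hx => ?_)
    have h1 : 0 ≤ min x (1-x) := le_min hx.1.le (by linarith [hx.2])
    positivity
  -- the double-integral inner function
  set F := fun x => ∫ y in Ioc (0:ℝ) 1, (w x - w y)^2 / |x - y|^2 with hFdef
  have hFint : IntegrableOn F (Ioc 0 1) :=
    (prod_integrable hw hMf measurableSet_Ioc measurableSet_Ioc hsub01 hsub01).integral_prod_left
  set B := ∫ x in Ioc (0:ℝ) 1, F x with hBdef
  ---------------------------------------------------------------- A bound
  have hKbd : ∀ s t : Set ℝ, MeasurableSet t → t ⊆ Icc (0:ℝ) 1 → True := fun _ _ _ _ => trivial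
  set K := ∫ y in Ioc (1/4:ℝ) (3/4), (w y)^2 with hKdef
  have hK4R : K ≤ 4 * R := by
    have hmono : K ≤ ∫ y in Ioc (1/4:ℝ) (3/4), 4 * (min y (1-y) * ((w y)^2 + (w' y)^2)) := by
      refine setIntegral_mono_on (hAint.mono_set ?_) ((hRint.mono_set ?_).const_mul 4)
        measurableSet_Ioc ?_
      · exact Ioc_subset_Ioc (by norm_num) (by norm_num)
      · exact Ioc_subset_Ioc (by norm_num) (by norm_num)
      · intro y hy
        have h1 : (1/4:ℝ) ≤ min y (1-y) := le_min hy.1.le (by linarith [hy.2])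
        nlinarith [sq_nonneg (w y), sq_nonneg (w' y)]
    have hext : ∫ y in Ioc (1/4:ℝ) (3/4), 4 * (min y (1-y) * ((w y)^2 + (w' y)^2)) ≤ 4 * R := by
      rw [← integral_const_mul]
      refine setIntegral_mono_set ((hRint.const_mul 4)) ?_ ?_
      · filter_upwards [ae_restrict_mem measurableSet_Ioc] with y hy
        have h1 : 0 ≤ min y (1-y) := le_min hy.1.le (by linarith [hy.2])
        positivity
      · exact HasSubset.Subset.eventuallyLE (Ioc_subset_Ioc (by norm_num) (by norm_num))
    exact le_trans hmono hext
  have hptA : ∀ x ∈ Ioc (0:ℝ) 1, (w x)^2 ≤ 4 * F x + 4 * K := by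
    intro x hx
    have hxI : x ∈ Icc (0:ℝ) 1 := hsub01 hx
    have hsub14 : Ioc (1/4:ℝ) (3/4) ⊆ Icc (0:ℝ) 1 := hsubIoc (by norm_num) (by norm_num)
    have hfx : IntegrableOn (fun y => (w x - w y)^2 / |x - y|^2) (Ioc (1/4:ℝ) (3/4)) :=
      inner_integrable hw hMf hxI measurableSet_Ioc hsub14
    have hwsq : IntegrableOn (fun y => (w y)^2) (Ioc (1/4:ℝ) (3/4)) :=
      hAint.mono_set (Ioc_subset_Ioc (by norm_num) (by norm_num))
    have hconst : IntegrableOn (fun _ : ℝ => (w x)^2) (Ioc (1/4:ℝ) (3/4)) :=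
      (integrableOn_const_iff).mpr (Or.inr (by rw [Real.volume_Ioc]; exact ENNReal.ofReal_lt_top))
    have h1 : (w x)^2 = 2 * ∫ _y in Ioc (1/4:ℝ) (3/4), (w x)^2 := by
      rw [setIntegral_const, measureReal_def, Real.volume_Ioc, smul_eq_mul,
        ENNReal.toReal_ofReal (by norm_num : (0:ℝ) ≤ 3/4 - 1/4)]
      norm_num
      ring
    have h2 : (∫ _y in Ioc (1/4:ℝ) (3/4), (w x)^2) ≤
        ∫ y in Ioc (1/4:ℝ) (3/4), (2 * ((w x - w y)^2 / |x - y|^2) + 2 * (w y)^2) := by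
      refine setIntegral_mono_on hconst ((hfx.const_mul 2).add (hwsq.const_mul 2))
        measurableSet_Ioc ?_
      intro y hy
      rcases eq_or_ne x y with rfl | hne
      · have h0 : (w x - w x)^2 / |x - x|^2 = 0 := by simp
        rw [h0]
        nlinarith [sq_nonneg (w x)]
      · have habs : 0 < |x - y| := abs_pos.mpr (sub_ne_zero.mpr hne)
        have habs1 : |x - y| ≤ 1 := by
          rw [abs_le]
          constructor
          · linarith [hx.1, hy.2]
          · linarith [hx.2, hy.1]
        have hfge : (w x - w y)^2 ≤ (w x - w y)^2 / |x - y|^2 := by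
          rw [le_div_iff₀ (by positivity)]
          refine mul_le_of_le_one_right (sq_nonneg _) ?_
          calc |x - y|^2 ≤ 1^2 := by
                apply pow_le_pow_left₀ (abs_nonneg _) habs1
            _ = 1 := one_pow 2
        nlinarith [sq_nonneg (w x - 2 * w y)]
    have h3 : (∫ y in Ioc (1/4:ℝ) (3/4), (2 * ((w x - w y)^2 / |x - y|^2) + 2 * (w y)^2)) =
        2 * (∫ y in Ioc (1/4:ℝ) (3/4), (w x - w y)^2 / |x - y|^2) + 2 * K := by
      rw [integral_add (hfx.const_mul 2) (hwsq.const_mul 2), integral_const_mul,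
        integral_const_mul]
    have h4 : (∫ y in Ioc (1/4:ℝ) (3/4), (w x - w y)^2 / |x - y|^2) ≤ F x := by
      refine setIntegral_mono_set
        (inner_integrable hw hMf hxI measurableSet_Ioc hsub01) ?_ ?_
      · exact ae_of_all _ (fun y => hfnonneg x y)
      · exact HasSubset.Subset.eventuallyLE (Ioc_subset_Ioc (by norm_num) (by norm_num))
    linarith
  have hA : A ≤ 4 * B + 4 * K := by
    have hmono : A ≤ ∫ x in Ioc (0:ℝ) 1, (4 * F x + 4 * K) :=
      setIntegral_mono_on hAint ((hFint.const_mul 4).add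
        ((integrableOn_const_iff).mpr (Or.inr (by rw [Real.volume_Ioc]; exact ENNReal.ofReal_lt_top))))
        measurableSet_Ioc hptA
    have hcomp : (∫ x in Ioc (0:ℝ) 1, (4 * F x + 4 * K)) = 4 * B + 4 * K := by
      rw [integral_add (hFint.const_mul 4)
        ((integrableOn_const_iff).mpr (Or.inr (by rw [Real.volume_Ioc]; exact ENNReal.ofReal_lt_top))),
        integral_const_mul, setIntegral_const, measureReal_def, Real.volume_Ioc, smul_eq_mul,
        ENNReal.toReal_ofReal (by norm_num : (0:ℝ) ≤ 1 - 0)]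
      norm_num
      exact hBdef.symm
    linarith
  ---------------------------------------------------------------- Q1
  have hQ1main : (∫ x in Ioc (0:ℝ) b, ∫ y in Ioc (0:ℝ) b, (w x - w y)^2 / |x - y|^2) ≤
      8 * ∫ x in Ioc (0:ℝ) b, x * (w' x)^2 := main_left hder hw' hb0 hb1
  have hxw'int : IntegrableOn (fun x => x * (w' x)^2) (Ioc (0:ℝ) b) :=
    ((continuous_id.continuousOn.mul (hw'.pow 2)).integrableOn_Icc).mono_set
      (hsubIoc le_rfl hb1)
  have hwt1 : (∫ x in Ioc (0:ℝ) b, x * (w' x)^2) ≤ 100 * R := by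
    have hstep : (∫ x in Ioc (0:ℝ) b, x * (w' x)^2) ≤
        ∫ x in Ioc (0:ℝ) b, 100 * (min x (1-x) * ((w x)^2 + (w' x)^2)) := by
      refine setIntegral_mono_on hxw'int
        ((hRint.mono_set (Ioc_subset_Ioc le_rfl hb1)).const_mul 100) measurableSet_Ioc ?_
      intro x hx
      rcases le_total x (1-x) with h | h
      · rw [min_eq_left h]
        nlinarith [sq_nonneg (w x), sq_nonneg (w' x), hx.1.le]
      · rw [min_eq_right h]
        have hxb : x ≤ 99/100 := hx.2
        nlinarith [sq_nonneg (w x), sq_nonneg (w' x)]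
    have hext : (∫ x in Ioc (0:ℝ) b, 100 * (min x (1-x) * ((w x)^2 + (w' x)^2))) ≤ 100 * R := by
      rw [← integral_const_mul]
      refine setIntegral_mono_set (hRint.const_mul 100) ?_
        (HasSubset.Subset.eventuallyLE (Ioc_subset_Ioc le_rfl hb1))
      filter_upwards [ae_restrict_mem measurableSet_Ioc] with y hy
      have h1 : 0 ≤ min y (1-y) := le_min hy.1.le (by linarith [hy.2])
      positivity
    linarith
  have hQ1 : (∫ x in Ioc (0:ℝ) b, ∫ y in Ioc (0:ℝ) b, (w x - w y)^2 / |x - y|^2) ≤ 800 * R := by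
    linarith
  ---------------------------------------------------------------- Q4 via reflection
  set v : ℝ → ℝ := fun t => w (1 - t) with hvdef
  set v' : ℝ → ℝ := fun t => -w' (1 - t) with hv'def
  have hmaps : MapsTo (fun t : ℝ => 1 - t) (Icc 0 1) (Icc 0 1) := by
    intro z hz
    simp only [mem_Icc] at hz ⊢
    constructor <;> linarith [hz.1, hz.2]
  have hvder : ∀ t ∈ Icc (0:ℝ) 1, HasDerivWithinAt v (v' t) (Icc (0:ℝ) 1) t := by
    intro t ht
    have hmem : 1 - t ∈ Icc (0:ℝ) 1 := hmaps ht
    have h1 : HasDerivWithinAt (fun s : ℝ => 1 - s) (-1) (Icc 0 1) t := by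
      simpa using (hasDerivWithinAt_id t (Icc (0:ℝ) 1)).const_sub 1
    have h2 := (hder (1-t) hmem).comp t h1 hmaps
    have h3 : w' (1 - t) * (-1) = v' t := by rw [hv'def]; ring
    rw [h3] at h2
    exact h2
  have hv'cont : ContinuousOn v' (Icc 0 1) := by
    rw [hv'def]
    exact (hw'.comp (continuous_const.sub continuous_id).continuousOn hmaps).neg
  have hQ4main : (∫ x in Ioc (0:ℝ) b, ∫ y in Ioc (0:ℝ) b, (v x - v y)^2 / |x - y|^2) ≤
      8 * ∫ x in Ioc (0:ℝ) b, x * (v' x)^2 := main_left hvder hv'cont hb0 hb1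
  have h1b : (1:ℝ) - δ = b := by rw [hbdef, hδdef]; norm_num
  have hQ4eq : (∫ x in Ioc δ 1, ∫ y in Ioc δ 1, (w x - w y)^2 / |x - y|^2) =
      ∫ x in Ioc (0:ℝ) b, ∫ y in Ioc (0:ℝ) b, (v x - v y)^2 / |x - y|^2 := by
    have houter := reflect_eq (fun x => ∫ y in Ioc δ 1, (w x - w y)^2 / |x - y|^2)
      hδ0.le (by rw [hδdef]; norm_num)
    rw [h1b] at houter
    rw [← houter]
    refine setIntegral_congr_fun measurableSet_Ioc (fun s _ => ?_)
    have hinner := reflect_eq (fun y => (w (1 - s) - w y)^2 / |(1 - s) - y|^2)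
      hδ0.le (by rw [hδdef]; norm_num)
    rw [h1b] at hinner
    show (∫ y in Ioc δ 1, (w (1 - s) - w y)^2 / |(1 - s) - y|^2) = _
    rw [← hinner]
    refine setIntegral_congr_fun measurableSet_Ioc (fun t _ => ?_)
    show (w (1 - s) - w (1 - t))^2 / |(1 - s) - (1 - t)|^2 = (v s - v t)^2 / |s - t|^2
    rw [hvdef]
    rw [show (1:ℝ) - s - (1 - t) = t - s by ring, abs_sub_comm]
  have hvwt : (∫ x in Ioc (0:ℝ) b, x * (v' x)^2) = ∫ s in Ioc δ 1, (1-s) * (w' s)^2 := by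
    have h := reflect_eq (fun s => (1-s) * (w' s)^2) hδ0.le (by rw [hδdef]; norm_num)
    rw [h1b] at h
    rw [← h]
    refine setIntegral_congr_fun measurableSet_Ioc (fun s _ => ?_)
    show s * (v' s)^2 = (1 - (1 - s)) * (w' (1 - s))^2
    rw [hv'def]
    ring_nf
  have hvwt2 : (∫ s in Ioc δ 1, (1-s) * (w' s)^2) ≤ 100 * R := by
    have hint2 : IntegrableOn (fun s => (1-s) * (w' s)^2) (Ioc δ 1) :=
      (((continuous_const.sub continuous_id).continuousOn.mul (hw'.pow 2)).integrableOn_Icc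
        ).mono_set (hsubIoc hδ0.le le_rfl)
    have hstep : (∫ s in Ioc δ 1, (1-s) * (w' s)^2) ≤
        ∫ s in Ioc δ 1, 100 * (min s (1-s) * ((w s)^2 + (w' s)^2)) := by
      refine setIntegral_mono_on hint2
        ((hRint.mono_set (Ioc_subset_Ioc hδ0.le le_rfl)).const_mul 100) measurableSet_Ioc ?_
      intro s hs
      rcases le_total s (1-s) with h | h
      · rw [min_eq_left h]
        have hsδ : (1:ℝ)/100 ≤ s := hs.1.le
        nlinarith [sq_nonneg (w s), sq_nonneg (w' s)]
      · rw [min_eq_right h]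
        have hs1 : s ≤ 1 := hs.2
        nlinarith [sq_nonneg (w s), sq_nonneg (w' s)]
    have hext : (∫ s in Ioc δ 1, 100 * (min s (1-s) * ((w s)^2 + (w' s)^2))) ≤ 100 * R := by
      rw [← integral_const_mul]
      refine setIntegral_mono_set (hRint.const_mul 100) ?_
        (HasSubset.Subset.eventuallyLE (Ioc_subset_Ioc hδ0.le le_rfl))
      filter_upwards [ae_restrict_mem measurableSet_Ioc] with y hy
      have h1 : 0 ≤ min y (1-y) := le_min hy.1.le (by linarith [hy.2])
      positivity
    linarith
  have hQ4 : (∫ x in Ioc δ 1, ∫ y in Ioc δ 1, (w x - w y)^2 / |x - y|^2) ≤ 800 * R := by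
    rw [hQ4eq]
    calc _ ≤ 8 * ∫ x in Ioc (0:ℝ) b, x * (v' x)^2 := hQ4main
      _ = 8 * ∫ s in Ioc δ 1, (1-s) * (w' s)^2 := by rw [hvwt]
      _ ≤ 800 * R := by linarith
  ---------------------------------------------------------------- cross terms
  set KB := ∫ y in Ioc b 1, (w y)^2 with hKBdef
  set Kd := ∫ y in Ioc (0:ℝ) δ, (w y)^2 with hKddef
  have hwsq_nonneg : ∀ y : ℝ, 0 ≤ (w y)^2 := fun y => sq_nonneg _
  have hKB_A : KB ≤ A :=
    setIntegral_mono_set hAint (ae_of_all _ hwsq_nonneg)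
      (HasSubset.Subset.eventuallyLE (Ioc_subset_Ioc hb0.le le_rfl))
  have hKd_A : Kd ≤ A :=
    setIntegral_mono_set hAint (ae_of_all _ hwsq_nonneg)
      (HasSubset.Subset.eventuallyLE (Ioc_subset_Ioc le_rfl (by rw [hδdef]; norm_num)))
  have hcross_pt : ∀ x y : ℝ, (49/50:ℝ) ≤ |x - y| →
      (w x - w y)^2 / |x - y|^2 ≤ 3 * ((w x)^2 + (w y)^2) := by
    intro x y h
    have habs2 : (49/50:ℝ)^2 ≤ |x - y|^2 := by
      apply pow_le_pow_left₀ (by norm_num) h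
    rw [div_le_iff₀ (by nlinarith [abs_nonneg (x - y)])]
    nlinarith [sq_nonneg (w x + w y), sq_nonneg (w x - w y), sq_nonneg (w x),
      sq_nonneg (w y)]
  -- X1
  have hX1 : (∫ x in Ioc (0:ℝ) δ, ∫ y in Ioc b 1, (w x - w y)^2 / |x - y|^2) ≤
      (3/100) * Kd + (3/100) * KB := by
    have hsubδ : Ioc (0:ℝ) δ ⊆ Icc (0:ℝ) 1 := hsubIoc le_rfl (by rw [hδdef]; norm_num)
    have hsubb1 : Ioc b 1 ⊆ Icc (0:ℝ) 1 := hsubIoc hb0.le le_rfl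
    have hwsqb1 : IntegrableOn (fun y => (w y)^2) (Ioc b 1) :=
      hAint.mono_set (Ioc_subset_Ioc hb0.le le_rfl)
    have hinner : ∀ x ∈ Ioc (0:ℝ) δ,
        (∫ y in Ioc b 1, (w x - w y)^2 / |x - y|^2) ≤ (3/100) * (w x)^2 + 3 * KB := by
      intro x hx
      have hb1vol : (volume (Ioc b 1)).toReal = 1/100 := by
        rw [Real.volume_Ioc, ENNReal.toReal_ofReal (by rw [hbdef]; norm_num)]
        rw [hbdef]; norm_num
      have hmono : (∫ y in Ioc b 1, (w x - w y)^2 / |x - y|^2) ≤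
          ∫ y in Ioc b 1, (3 * (w x)^2 + 3 * (w y)^2) := by
        refine setIntegral_mono_on
          (inner_integrable hw hMf (hsubδ hx) measurableSet_Ioc hsubb1)
          (((integrableOn_const_iff).mpr (Or.inr (by rw [Real.volume_Ioc]; exact ENNReal.ofReal_lt_top))).add
            (hwsqb1.const_mul 3)) measurableSet_Ioc ?_
        intro y hy
        have habs : (49/50:ℝ) ≤ |x - y| := by
          rw [abs_sub_comm, abs_of_nonneg (by rw [hbdef] at hy; rw [hδdef] at hx; linarith [hy.1, hx.2])]
          rw [hbdef] at hy; rw [hδdef] at hx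
          linarith [hy.1, hx.2]
        have := hcross_pt x y habs
        linarith
      have hcomp : (∫ y in Ioc b 1, (3 * (w x)^2 + 3 * (w y)^2)) =
          (3/100) * (w x)^2 + 3 * KB := by
        rw [integral_add (show Integrable (fun _ : ℝ => 3 * (w x)^2) (volume.restrict (Ioc b 1)) from (integrableOn_const_iff (C := 3 * (w x)^2) (s := Ioc b 1) (μ := volume)).mpr (Or.inr (by rw [Real.volume_Ioc]; exact ENNReal.ofReal_lt_top)))
          (hwsqb1.const_mul 3), setIntegral_const, measureReal_def, smul_eq_mul, hb1vol, integral_const_mul]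
        ring
      linarith
    have houter : (∫ x in Ioc (0:ℝ) δ, ∫ y in Ioc b 1, (w x - w y)^2 / |x - y|^2) ≤
        ∫ x in Ioc (0:ℝ) δ, ((3/100) * (w x)^2 + 3 * KB) := by
      refine setIntegral_mono_on
        ((prod_integrable hw hMf measurableSet_Ioc measurableSet_Ioc hsubδ hsubb1).integral_prod_left)
        (((hAint.mono_set (Ioc_subset_Ioc le_rfl (by rw [hδdef]; norm_num))).const_mul (3/100)).add
          ((integrableOn_const_iff).mpr (Or.inr (by rw [Real.volume_Ioc]; exact ENNReal.ofReal_lt_top))))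
        measurableSet_Ioc hinner
    have hδvol : (volume (Ioc (0:ℝ) δ)).toReal = 1/100 := by
      rw [Real.volume_Ioc, ENNReal.toReal_ofReal (by rw [hδdef]; norm_num)]
      rw [hδdef]; norm_num
    have hcomp : (∫ x in Ioc (0:ℝ) δ, ((3/100) * (w x)^2 + 3 * KB)) =
        (3/100) * Kd + (3/100) * KB := by
      rw [integral_add ((hAint.mono_set (Ioc_subset_Ioc le_rfl (by rw [hδdef]; norm_num))).const_mul (3/100))
        ((integrableOn_const_iff).mpr (Or.inr (by rw [Real.volume_Ioc]; exact ENNReal.ofReal_lt_top))),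
        integral_const_mul, setIntegral_const, measureReal_def, smul_eq_mul, hδvol]
      ring
    linarith
  -- X2
  have hX2 : (∫ x in Ioc b 1, ∫ y in Ioc (0:ℝ) δ, (w x - w y)^2 / |x - y|^2) ≤
      (3/100) * KB + (3/100) * Kd := by
    have hsubδ : Ioc (0:ℝ) δ ⊆ Icc (0:ℝ) 1 := hsubIoc le_rfl (by rw [hδdef]; norm_num)
    have hsubb1 : Ioc b 1 ⊆ Icc (0:ℝ) 1 := hsubIoc hb0.le le_rfl
    have hwsqδ : IntegrableOn (fun y => (w y)^2) (Ioc (0:ℝ) δ) :=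
      hAint.mono_set (Ioc_subset_Ioc le_rfl (by rw [hδdef]; norm_num))
    have hinner : ∀ x ∈ Ioc b 1,
        (∫ y in Ioc (0:ℝ) δ, (w x - w y)^2 / |x - y|^2) ≤ (3/100) * (w x)^2 + 3 * Kd := by
      intro x hx
      have hδvol : (volume (Ioc (0:ℝ) δ)).toReal = 1/100 := by
        rw [Real.volume_Ioc, ENNReal.toReal_ofReal (by rw [hδdef]; norm_num)]
        rw [hδdef]; norm_num
      have hmono : (∫ y in Ioc (0:ℝ) δ, (w x - w y)^2 / |x - y|^2) ≤
          ∫ y in Ioc (0:ℝ) δ, (3 * (w x)^2 + 3 * (w y)^2) := by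
        refine setIntegral_mono_on
          (inner_integrable hw hMf (hsubb1 hx) measurableSet_Ioc hsubδ)
          (((integrableOn_const_iff).mpr (Or.inr (by rw [Real.volume_Ioc]; exact ENNReal.ofReal_lt_top))).add
            (hwsqδ.const_mul 3)) measurableSet_Ioc ?_
        intro y hy
        have habs : (49/50:ℝ) ≤ |x - y| := by
          rw [abs_of_nonneg (by rw [hbdef] at hx; rw [hδdef] at hy; linarith [hx.1, hy.2])]
          rw [hbdef] at hx; rw [hδdef] at hy
          linarith [hx.1, hy.2]
        have := hcross_pt x y habs
        linarith
      have hcomp : (∫ y in Ioc (0:ℝ) δ, (3 * (w x)^2 + 3 * (w y)^2)) =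
          (3/100) * (w x)^2 + 3 * Kd := by
        rw [integral_add (show Integrable (fun _ : ℝ => 3 * (w x)^2) (volume.restrict (Ioc (0:ℝ) δ)) from (integrableOn_const_iff (C := 3 * (w x)^2) (s := Ioc (0:ℝ) δ) (μ := volume)).mpr (Or.inr (by rw [Real.volume_Ioc]; exact ENNReal.ofReal_lt_top)))
          (hwsqδ.const_mul 3), setIntegral_const, measureReal_def, smul_eq_mul, hδvol, integral_const_mul]
        ring
      linarith
    have houter : (∫ x in Ioc b 1, ∫ y in Ioc (0:ℝ) δ, (w x - w y)^2 / |x - y|^2) ≤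
        ∫ x in Ioc b 1, ((3/100) * (w x)^2 + 3 * Kd) := by
      refine setIntegral_mono_on
        ((prod_integrable hw hMf measurableSet_Ioc measurableSet_Ioc hsubb1 hsubδ).integral_prod_left)
        (((hAint.mono_set (Ioc_subset_Ioc hb0.le le_rfl)).const_mul (3/100)).add
          ((integrableOn_const_iff).mpr (Or.inr (by rw [Real.volume_Ioc]; exact ENNReal.ofReal_lt_top))))
        measurableSet_Ioc hinner
    have hb1vol : (volume (Ioc b 1)).toReal = 1/100 := by
      rw [Real.volume_Ioc, ENNReal.toReal_ofReal (by rw [hbdef]; norm_num)]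
      rw [hbdef]; norm_num
    have hcomp : (∫ x in Ioc b 1, ((3/100) * (w x)^2 + 3 * Kd)) =
        (3/100) * KB + (3/100) * Kd := by
      rw [integral_add ((hAint.mono_set (Ioc_subset_Ioc hb0.le le_rfl)).const_mul (3/100))
        ((integrableOn_const_iff).mpr (Or.inr (by rw [Real.volume_Ioc]; exact ENNReal.ofReal_lt_top))),
        integral_const_mul, setIntegral_const, measureReal_def, smul_eq_mul, hb1vol]
      ring
    linarith
  ---------------------------------------------------------------- B decomposition
  set gS : ℝ → ℝ := fun x => ∫ y in Ioc (0:ℝ) b, (w x - w y)^2 / |x - y|^2 with hgSdef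
  set gT : ℝ → ℝ := fun x => ∫ y in Ioc δ 1, (w x - w y)^2 / |x - y|^2 with hgTdef
  set gU : ℝ → ℝ := fun x => ∫ y in Ioc b 1, (w x - w y)^2 / |x - y|^2 with hgUdef
  set gV : ℝ → ℝ := fun x => ∫ y in Ioc (0:ℝ) δ, (w x - w y)^2 / |x - y|^2 with hgVdef
  have hsubδ : Ioc (0:ℝ) δ ⊆ Icc (0:ℝ) 1 := hsubIoc le_rfl (by rw [hδdef]; norm_num)
  have hsubb1 : Ioc b 1 ⊆ Icc (0:ℝ) 1 := hsubIoc hb0.le le_rfl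
  have hsub0b : Ioc (0:ℝ) b ⊆ Icc (0:ℝ) 1 := hsubIoc le_rfl hb1
  have hsubδ1 : Ioc δ 1 ⊆ Icc (0:ℝ) 1 := hsubIoc hδ0.le le_rfl
  have hgSint : ∀ {s : Set ℝ}, MeasurableSet s → s ⊆ Icc (0:ℝ) 1 → IntegrableOn gS s := by
    intro s hs hs1
    exact (prod_integrable hw hMf hs measurableSet_Ioc hs1 hsub0b).integral_prod_left
  have hgTint : ∀ {s : Set ℝ}, MeasurableSet s → s ⊆ Icc (0:ℝ) 1 → IntegrableOn gT s := by
    intro s hs hs1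
    exact (prod_integrable hw hMf hs measurableSet_Ioc hs1 hsubδ1).integral_prod_left
  have hgUint : ∀ {s : Set ℝ}, MeasurableSet s → s ⊆ Icc (0:ℝ) 1 → IntegrableOn gU s := by
    intro s hs hs1
    exact (prod_integrable hw hMf hs measurableSet_Ioc hs1 hsubb1).integral_prod_left
  have hgVint : ∀ {s : Set ℝ}, MeasurableSet s → s ⊆ Icc (0:ℝ) 1 → IntegrableOn gV s := by
    intro s hs hs1
    exact (prod_integrable hw hMf hs measurableSet_Ioc hs1 hsubδ).integral_prod_left
  have hδb : δ ≤ b := by rw [hδdef, hbdef]; norm_num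
  have hFsplit1 : ∀ x ∈ Icc (0:ℝ) 1, F x = gS x + gU x := by
    intro x hxI
    show (∫ y in Ioc (0:ℝ) 1, (w x - w y)^2 / |x - y|^2) = _
    rw [← Ioc_union_Ioc_eq_Ioc hb0.le hb1,
      setIntegral_union (Ioc_disjoint_Ioc_of_le le_rfl) measurableSet_Ioc
        (inner_integrable hw hMf hxI measurableSet_Ioc hsub0b)
        (inner_integrable hw hMf hxI measurableSet_Ioc hsubb1)]
  have hFsplit2 : ∀ x ∈ Icc (0:ℝ) 1, F x = gV x + gT x := by
    intro x hxI
    show (∫ y in Ioc (0:ℝ) 1, (w x - w y)^2 / |x - y|^2) = _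
    rw [← Ioc_union_Ioc_eq_Ioc hδ0.le (le_trans hδb hb1),
      setIntegral_union (Ioc_disjoint_Ioc_of_le le_rfl) measurableSet_Ioc
        (inner_integrable hw hMf hxI measurableSet_Ioc hsubδ)
        (inner_integrable hw hMf hxI measurableSet_Ioc hsubδ1)]
  have houtersplit : B = (∫ x in Ioc (0:ℝ) δ, F x) + (∫ x in Ioc δ b, F x) +
      ∫ x in Ioc b 1, F x := by
    rw [hBdef, ← Ioc_union_Ioc_eq_Ioc hb0.le hb1,
      setIntegral_union (Ioc_disjoint_Ioc_of_le le_rfl) measurableSet_Ioc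
        (hFint.mono_set (Ioc_subset_Ioc le_rfl hb1))
        (hFint.mono_set (Ioc_subset_Ioc hb0.le le_rfl)),
      ← Ioc_union_Ioc_eq_Ioc hδ0.le hδb,
      setIntegral_union (Ioc_disjoint_Ioc_of_le le_rfl) measurableSet_Ioc
        ((hFint.mono_set (Ioc_subset_Ioc le_rfl hb1)).mono_set (Ioc_subset_Ioc le_rfl hδb))
        ((hFint.mono_set (Ioc_subset_Ioc le_rfl hb1)).mono_set (Ioc_subset_Ioc hδ0.le le_rfl))]
  have hpiece1 : (∫ x in Ioc (0:ℝ) δ, F x) = (∫ x in Ioc (0:ℝ) δ, gS x) +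
      ∫ x in Ioc (0:ℝ) δ, gU x := by
    rw [← integral_add (hgSint measurableSet_Ioc hsubδ) (hgUint measurableSet_Ioc hsubδ)]
    exact setIntegral_congr_fun measurableSet_Ioc (fun x hx => hFsplit1 x (hsubδ hx))
  have hpiece2 : (∫ x in Ioc δ b, F x) = (∫ x in Ioc δ b, gS x) +
      ∫ x in Ioc δ b, gU x := by
    rw [← integral_add (hgSint measurableSet_Ioc (hsubIoc hδ0.le hb1))
      (hgUint measurableSet_Ioc (hsubIoc hδ0.le hb1))]
    exact setIntegral_congr_fun measurableSet_Ioc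
      (fun x hx => hFsplit1 x ((hsubIoc hδ0.le hb1) hx))
  have hpiece3 : (∫ x in Ioc b 1, F x) = (∫ x in Ioc b 1, gV x) +
      ∫ x in Ioc b 1, gT x := by
    rw [← integral_add (hgVint measurableSet_Ioc hsubb1) (hgTint measurableSet_Ioc hsubb1)]
    exact setIntegral_congr_fun measurableSet_Ioc (fun x hx => hFsplit2 x (hsubb1 hx))
  have hUleT : (∫ x in Ioc δ b, gU x) ≤ ∫ x in Ioc δ b, gT x := by
    refine setIntegral_mono_on (hgUint measurableSet_Ioc (hsubIoc hδ0.le hb1))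
      (hgTint measurableSet_Ioc (hsubIoc hδ0.le hb1)) measurableSet_Ioc ?_
    intro x hx
    refine setIntegral_mono_set
      (inner_integrable hw hMf ((hsubIoc hδ0.le hb1) hx) measurableSet_Ioc hsubδ1)
      (ae_of_all _ (fun y => hfnonneg x y))
      (HasSubset.Subset.eventuallyLE (Ioc_subset_Ioc hδb le_rfl))
  have hglue1 : (∫ x in Ioc (0:ℝ) δ, gS x) + (∫ x in Ioc δ b, gS x) =
      ∫ x in Ioc (0:ℝ) b, gS x := by
    rw [← setIntegral_union (Ioc_disjoint_Ioc_of_le le_rfl) measurableSet_Ioc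
      (hgSint measurableSet_Ioc hsubδ) (hgSint measurableSet_Ioc (hsubIoc hδ0.le hb1)),
      Ioc_union_Ioc_eq_Ioc hδ0.le hδb]
  have hglue2 : (∫ x in Ioc δ b, gT x) + (∫ x in Ioc b 1, gT x) =
      ∫ x in Ioc δ 1, gT x := by
    rw [← setIntegral_union (Ioc_disjoint_Ioc_of_le le_rfl) measurableSet_Ioc
      (hgTint measurableSet_Ioc (hsubIoc hδ0.le hb1)) (hgTint measurableSet_Ioc hsubb1),
      Ioc_union_Ioc_eq_Ioc hδb hb1]
  have hB : B ≤ (∫ x in Ioc (0:ℝ) b, gS x) + (∫ x in Ioc δ 1, gT x) +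
      (∫ x in Ioc (0:ℝ) δ, gU x) + ∫ x in Ioc b 1, gV x := by
    rw [houtersplit, hpiece1, hpiece2, hpiece3]
    linarith [hUleT, hglue1, hglue2]
  ---------------------------------------------------------------- final assembly
  have hBbound : B ≤ 1600 * R + (12/100) * A := by
    have h1 : (∫ x in Ioc (0:ℝ) b, gS x) ≤ 800 * R := hQ1
    have h2 : (∫ x in Ioc δ 1, gT x) ≤ 800 * R := hQ4
    have h3 : (∫ x in Ioc (0:ℝ) δ, gU x) ≤ (3/100) * Kd + (3/100) * KB := hX1
    have h4 : (∫ x in Ioc b 1, gV x) ≤ (3/100) * KB + (3/100) * Kd := hX2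
    linarith
  have hAbound : A ≤ 4 * B + 16 * R := by linarith
  -- rewrite the statement
  rw [intervalIntegral.integral_of_le zero_le_one, intervalIntegral.integral_of_le zero_le_one,
    intervalIntegral.integral_of_le zero_le_one]
  have hBmatch : (∫ x in Ioc (0:ℝ) 1, ∫ y in (0:ℝ)..1, (w x - w y)^2 / |x - y|^2) = B :=
    setIntegral_congr_fun measurableSet_Ioc
      (fun x _ => intervalIntegral.integral_of_le zero_le_one)
  rw [hBmatch]
  linarith
end
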